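/- arXiv:math/0206101 — 10 statements merged into one kernel-verified Lean document; each statement's English description precedes it below -/
import Mathlib

section
/- Let K be a field and let R be a commutative Noetherian local domain which is a K-algebra such that the composite K → R → R/m is an isomorphism (so the residue field of R is K), and such that R is regular of Krull dimension 1 (i.e. R is a discrete valuation ring). Let G be a finite subgroup of the group of K-algebra automorphisms of R. Then there exists a group homomorphism f : G → Kˣ such that for every σ ∈ G and every v ∈ m one has σ(v) − (algebraMap K R (f σ)) · v ∈ m², and such that: if char K = 0 then f is injective, and if char K = p > 0 then every element of the kernel of f has order a power of p. -/
set_option linter.unusedSectionVars false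

open IsLocalRing

section Aux

variable {K R : Type*} [Field K] [CommRing R] [IsDomain R] [IsLocalRing R] [Algebra K R]

lemma dvrAux_mem_m (σ : R ≃ₐ[K] R) {x : R} (hx : x ∈ maximalIdeal R) :
    σ x ∈ maximalIdeal R := by
  rw [mem_maximalIdeal] at hx ⊢
  intro h
  exact hx (by simpa using h.map σ.symm.toAlgHom)

lemma dvrAux_c (hres : Function.Bijective ((residue R).comp (algebraMap K R))) (r : R) :
    ∃ c : K, r - algebraMap K R c ∈ maximalIdeal R := by
  obtain ⟨c, hc⟩ := hres.surjective (residue R r)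
  refine ⟨c, ?_⟩
  have : residue R (r - algebraMap K R c) = 0 := by
    simp only [map_sub]
    rw [show residue R (algebraMap K R c) = ((residue R).comp (algebraMap K R)) c from rfl, hc]
    simp
  exact (Ideal.Quotient.eq_zero_iff_mem).1 this

lemma dvrAux_cuniq (hres : Function.Bijective ((residue R).comp (algebraMap K R))) {c : K}
    (h : algebraMap K R c ∈ maximalIdeal R) : c = 0 := by
  apply hres.injective
  have : residue R (algebraMap K R c) = 0 := Ideal.Quotient.eq_zero_iff_mem.2 h
  simpa using this

lemma dvrAux_sub_mem (hres : Function.Bijective ((residue R).comp (algebraMap K R)))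
    (σ : R ≃ₐ[K] R) (r : R) : σ r - r ∈ maximalIdeal R := by
  obtain ⟨c, hc⟩ := dvrAux_c hres r
  have h2 : σ r - algebraMap K R c ∈ maximalIdeal R := by
    have := dvrAux_mem_m σ hc
    simpa [map_sub] using this
  have h3 : σ r - r = (σ r - algebraMap K R c) - (r - algebraMap K R c) := by ring
  rw [h3]; exact sub_mem h2 hc

variable (hres : Function.Bijective ((residue R).comp (algebraMap K R)))
variable {t : R} (ht : maximalIdeal R = Ideal.span {t})

include hres ht in
lemma dvrAux_L (σ : R ≃ₐ[K] R) {i : ℕ} (hσt : t ^ (i + 1) ∣ σ t - t) :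
    ∀ x, t ∣ x → t ^ (i + 1) ∣ σ x - x := by
  suffices h : ∀ k, k ≤ i → ∀ x, t ∣ x → t ^ (k + 1) ∣ σ x - x from h i le_rfl
  intro k
  induction k with
  | zero =>
    intro _ x hx
    have : σ x - x ∈ maximalIdeal R := dvrAux_sub_mem hres σ x
    rw [ht, Ideal.mem_span_singleton] at this
    simpa using this
  | succ k IH =>
    intro hk x hx
    obtain ⟨r, rfl⟩ := hx
    obtain ⟨c, hc⟩ := dvrAux_c hres r
    rw [ht, Ideal.mem_span_singleton] at hc
    have hs : t ^ (k + 1) ∣ σ r - r := by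
      have h1 : σ r - r = σ (r - algebraMap K R c) - (r - algebraMap K R c) := by
        simp only [map_sub, AlgEquiv.commutes]; ring
      rw [h1]; exact IH (by omega) _ hc
    have key : σ (t * r) - t * r = σ r * (σ t - t) + (σ r - r) * t := by
      simp only [map_mul]; ring
    rw [key]
    refine dvd_add (Dvd.dvd.mul_left ?_ _) ?_
    · exact (pow_dvd_pow t (by omega)).trans hσt
    · rw [pow_succ]
      exact mul_dvd_mul hs dvd_rfl

include hres ht in
lemma dvrAux_tdvd (σ : R ≃ₐ[K] R) : t ∣ σ t := by
  have : σ t ∈ maximalIdeal R := dvrAux_mem_m σ (by rw [ht]; exact Ideal.mem_span_singleton_self t)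
  rwa [ht, Ideal.mem_span_singleton] at this

include hres ht in
lemma dvrAux_L2 (σ : R ≃ₐ[K] R) {i : ℕ} (hσt : t ^ (i + 1) ∣ σ t - t) :
    ∀ j x, t ^ (j + 1) ∣ x → t ^ (i + 1 + j) ∣ σ x - x := by
  intro j
  induction j with
  | zero =>
    intro x hx
    simpa using dvrAux_L hres ht σ hσt x (by simpa using hx)
  | succ j IH =>
    intro x hx
    obtain ⟨z, rfl⟩ := hx
    have hx' : t ^ (j + 1 + 1) * z = (t ^ (j + 1) * z) * t := by ring
    set y := t ^ (j + 1) * z with hy_def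
    have hy : t ^ (j + 1) ∣ y := dvd_mul_right _ _
    have hσy : t ^ (j + 1) ∣ σ y := by
      rw [hy_def, map_mul, map_pow]
      exact Dvd.dvd.mul_right (pow_dvd_pow_of_dvd (dvrAux_tdvd hres ht σ) _) _
    have key : σ (y * t) - y * t = σ y * (σ t - t) + (σ y - y) * t := by
      simp only [map_mul]; ring
    rw [hx', key]
    refine dvd_add ?_ ?_
    · have h1 := mul_dvd_mul hσy hσt
      rw [← pow_add] at h1
      exact (pow_dvd_pow t (by omega)).trans h1
    · have : (i + 1 + (j + 1)) = (i + 1 + j) + 1 := by omega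
      rw [this, pow_succ]
      exact mul_dvd_mul (IH y hy) dvd_rfl

include hres ht in
lemma dvrAux_pow (σ : R ≃ₐ[K] R) {i : ℕ} (hi : 1 ≤ i) (hσt : t ^ (i + 1) ∣ σ t - t) :
    ∀ n : ℕ, t ^ (i + 1) ∣ (σ ^ n) t - t ∧
      t ^ (i + 2) ∣ ((σ ^ n) t - t) - (n : R) * (σ t - t) := by
  intro n
  induction n with
  | zero => simp
  | succ n IH =>
    obtain ⟨IH1, IH2⟩ := IH
    have happ : (σ ^ (n + 1)) t = σ ((σ ^ n) t) := by
      rw [pow_succ']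
      exact AlgEquiv.mul_apply _ _ _
    set B := (σ ^ n) t - t with hB
    have hBm : (σ ^ n) t = t + B := by rw [hB]; ring
    have hσB : t ^ (i + 2) ∣ σ B - B := by
      have h2 := dvrAux_L2 hres ht σ hσt i B (by simpa using IH1)
      exact (pow_dvd_pow t (by omega)).trans h2
    have hexp : (σ ^ (n + 1)) t - t = (σ B - B) + B + (σ t - t) := by
      rw [happ, hBm, map_add]; ring
    constructor
    · rw [hexp]
      exact dvd_add (dvd_add ((pow_dvd_pow t (by omega)).trans hσB) IH1) hσt
    · have hexp2 : ((σ ^ (n + 1)) t - t) - ((n : ℕ) + 1 : R) * (σ t - t)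
          = (σ B - B) + (B - (n : R) * (σ t - t)) := by
        rw [hexp, hB]; ring
      rw [Nat.cast_add, Nat.cast_one]
      rw [hexp2]
      exact dvd_add hσB IH2

include hres ht in
lemma dvrAux_main [IsNoetherianRing R] (ht0 : t ≠ 0)
    (σ : R ≃ₐ[K] R) {n : ℕ} (hσn : σ ^ n = 1) (hn : (n : K) ≠ 0)
    (hker : t ^ 2 ∣ σ t - t) : σ = 1 := by
  have hu : IsUnit ((n : R)) := by
    have h1 : ((n : R)) = algebraMap K R ((n : K)) := by simp
    rw [h1]
    exact (isUnit_iff_ne_zero.2 hn).map (algebraMap K R)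
  have hbot : ∀ x : R, (∀ i : ℕ, t ^ i ∣ x) → x = 0 := by
    intro x hx
    have hmem : x ∈ ⨅ i : ℕ, (maximalIdeal R) ^ i := by
      rw [Ideal.mem_iInf]
      intro i
      rw [ht, Ideal.span_singleton_pow, Ideal.mem_span_singleton]
      exact hx i
    rwa [Ideal.iInf_pow_eq_bot_of_isLocalRing _ (maximalIdeal.isMaximal R).ne_top,
      Ideal.mem_bot] at hmem
  have h2 : ∀ i : ℕ, t ^ (i + 2) ∣ σ t - t := by
    intro i
    induction i with
    | zero => simpa using hker
    | succ i IH =>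
      have hp := (dvrAux_pow hres ht σ (i := i + 1) (by omega) (by simpa using IH) n).2
      have h0 : (σ ^ n) t - t = 0 := by rw [hσn]; simp
      rw [h0, zero_sub, dvd_neg] at hp
      -- hp : t ^ (i + 3) ∣ (n:R) * (σ t - t)
      obtain ⟨u, hu'⟩ := hu
      have := hp.mul_left (↑u⁻¹ : R)
      rw [← mul_assoc, ← hu', Units.inv_mul, one_mul] at this
      exact (pow_dvd_pow t (by omega)).trans this
  have hAt : σ t = t := by
    have := hbot (σ t - t) (fun i => (pow_dvd_pow t (by omega : i ≤ i + 2)).trans (h2 i))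
    exact sub_eq_zero.mp this
  have hfix : ∀ x, t ∣ x → σ x = x := by
    intro x hx
    refine sub_eq_zero.mp (hbot (σ x - x) fun i => ?_)
    have h1 : t ^ (i + 1) ∣ σ t - t := by rw [hAt, sub_self]; exact dvd_zero _
    exact (pow_dvd_pow t (by omega : i ≤ i + 1)).trans (dvrAux_L hres ht σ h1 x hx)
  ext r
  obtain ⟨c, hc⟩ := dvrAux_c hres r
  rw [ht, Ideal.mem_span_singleton] at hc
  have := hfix _ hc
  rw [map_sub, AlgEquiv.commutes] at this
  have h2 : σ r = r := by
    have h3 : σ r - algebraMap K R c - (r - algebraMap K R c) = 0 := by rw [this]; ring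
    have h4 : σ r - r = 0 := by rw [← h3]; ring
    exact sub_eq_zero.mp h4
  simpa using h2

end Aux
/-- Let `K` be a field and `R` a commutative Noetherian local domain which is a
`K`-algebra whose residue map `K → R/m` is an isomorphism, and which is regular of
Krull dimension `1`, i.e. a discrete valuation ring.  For every finite subgroup `G` of
the group of `K`-algebra automorphisms of `R` there is a group homomorphism
`f : G →* Kˣ` (the action on the cotangent space `m/m²`) such that
`σ(v) ≡ f(σ)·v (mod m²)` for all `σ ∈ G` and `v ∈ m`; moreover `f` is injective if
`char K = 0`, and if `char K = p > 0` then every element of `ker f` has order a power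
of `p`. -/
theorem dvr_aut_cotangent_hom (K R : Type*) [Field K] [CommRing R] [IsDomain R]
    [IsNoetherianRing R] [IsLocalRing R] [Algebra K R]
    (hres : Function.Bijective ((IsLocalRing.residue R).comp (algebraMap K R)))
    [IsDiscreteValuationRing R]
    (G : Subgroup (R ≃ₐ[K] R)) [Finite G] :
    ∃ f : G →* Kˣ,
      (∀ σ : G, ∀ v ∈ IsLocalRing.maximalIdeal R,
        (σ : R ≃ₐ[K] R) v - algebraMap K R (f σ : K) * v ∈
          (IsLocalRing.maximalIdeal R) ^ 2) ∧
      (ringChar K = 0 → Function.Injective f) ∧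
      (∀ p : ℕ, p ≠ 0 → ringChar K = p → ∀ σ ∈ f.ker, ∃ k : ℕ, orderOf σ = p ^ k) := by
  classical
  obtain ⟨t, htirr⟩ := IsDiscreteValuationRing.exists_irreducible R
  have ht : maximalIdeal R = Ideal.span {t} :=
    (IsDiscreteValuationRing.irreducible_iff_uniformizer t).1 htirr
  have ht0 : t ≠ 0 := htirr.ne_zero
  -- uniqueness of the cotangent scalar
  have huniq : ∀ (σ : R ≃ₐ[K] R) (c c' : K),
      t ^ 2 ∣ σ t - algebraMap K R c * t → t ^ 2 ∣ σ t - algebraMap K R c' * t → c = c' := by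
    intro σ c c' h h'
    have hd : t ^ 2 ∣ algebraMap K R (c' - c) * t := by
      have := dvd_sub h h'
      have he : (σ t - algebraMap K R c * t) - (σ t - algebraMap K R c' * t)
          = algebraMap K R (c' - c) * t := by rw [map_sub]; ring
      rwa [he] at this
    obtain ⟨r, hr⟩ := hd
    have hcan : algebraMap K R (c' - c) = t * r := by
      have h1 : algebraMap K R (c' - c) * t = (t * r) * t := by rw [hr]; ring
      exact mul_right_cancel₀ ht0 h1
    have hm : algebraMap K R (c' - c) ∈ maximalIdeal R := by
      rw [ht, Ideal.mem_span_singleton, hcan]; exact Dvd.intro r rfl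
    have := dvrAux_cuniq hres hm
    have : c' - c = 0 := this
    exact (sub_eq_zero.mp this).symm
  -- existence of the cotangent scalar
  have hex : ∀ σ : R ≃ₐ[K] R, ∃ c : K, c ≠ 0 ∧ t ^ 2 ∣ σ t - algebraMap K R c * t := by
    intro σ
    obtain ⟨u, hu⟩ := dvrAux_tdvd hres ht σ
    obtain ⟨c, hc⟩ := dvrAux_c hres u
    rw [ht, Ideal.mem_span_singleton] at hc
    obtain ⟨w, hw⟩ := hc
    refine ⟨c, ?_, ?_⟩
    · rintro rfl
      -- then σ t = t * (t * w), contradicting irreducibility of σ t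
      have hirr2 : Irreducible (σ t) := htirr.map σ
      have hfac : σ t = t * (t * w) := by
        rw [hu]
        have : u = t * w := by simpa using hw
        rw [this]
      rcases hirr2.isUnit_or_isUnit hfac with hun | hun
      · exact htirr.not_isUnit hun
      · exact htirr.not_isUnit (isUnit_of_mul_isUnit_left (by rwa [mul_comm] at hun))
    · refine ⟨w, ?_⟩
      rw [hu]
      have : u - algebraMap K R c = t * w := hw
      calc t * u - algebraMap K R c * t = (u - algebraMap K R c) * t := by ring
        _ = t ^ 2 * w := by rw [this]; ring
  choose g hg0 hgUC using hex
  have hg1 : g 1 = 1 := by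
    refine huniq 1 _ _ (hgUC 1) ?_
    simp
  have hgmul : ∀ σ τ : R ≃ₐ[K] R, g (σ * τ) = g σ * g τ := by
    intro σ τ
    refine huniq _ _ _ (hgUC _) ?_
    obtain ⟨d, hd⟩ := hgUC τ
    obtain ⟨e, he⟩ := hgUC σ
    have hτ : τ t = algebraMap K R (g τ) * t + t ^ 2 * d := by rw [← hd]; ring
    have happ : (σ * τ) t = σ (τ t) := AlgEquiv.mul_apply _ _ _
    obtain ⟨q, hq⟩ := dvrAux_tdvd hres ht σ
    have hcalc : (σ * τ) t - algebraMap K R (g σ * g τ) * t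
        = algebraMap K R (g τ) * (σ t - algebraMap K R (g σ) * t) + (t * q) ^ 2 * σ d := by
      rw [happ, hτ]
      simp only [map_add, map_mul, map_pow, AlgEquiv.commutes, hq]
      ring
    rw [hcalc]
    refine dvd_add (Dvd.dvd.mul_left ⟨e, by rw [he]⟩ _) ?_
    refine Dvd.dvd.mul_right ?_ _
    exact ⟨q ^ 2, by ring⟩
  set f : G →* Kˣ :=
    { toFun := fun σ => Units.mk0 (g (σ : R ≃ₐ[K] R)) (hg0 _),
      map_one' := by ext; simpa using hg1,
      map_mul' := by intro a b; ext; simpa using hgmul _ _ } with hf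
  have hfval : ∀ σ : G, ((f σ : Kˣ) : K) = g (σ : R ≃ₐ[K] R) := fun σ => rfl
  -- the key rigidity statement
  have key : ∀ σ : G, g (σ : R ≃ₐ[K] R) = 1 → ((orderOf σ : K) ≠ 0) → σ = 1 := by
    intro σ hgσ hn
    have hk2 : t ^ 2 ∣ (σ : R ≃ₐ[K] R) t - t := by
      have := hgUC (σ : R ≃ₐ[K] R)
      rw [hgσ] at this
      simpa using this
    have hpow : (σ : R ≃ₐ[K] R) ^ (orderOf σ) = 1 := by
      have h1 : σ ^ orderOf σ = 1 := pow_orderOf_eq_one σ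
      have h2 : ((σ ^ orderOf σ : G) : R ≃ₐ[K] R) = ((1 : G) : R ≃ₐ[K] R) := by rw [h1]
      simpa only [Subgroup.coe_pow, Subgroup.coe_one] using h2
    have := dvrAux_main hres ht ht0 _ hpow hn hk2
    exact Subtype.ext (by rw [this]; rfl)
  refine ⟨f, ?_, ?_, ?_⟩
  · -- congruence property
    intro σ v hv
    rw [ht, Ideal.mem_span_singleton] at hv
    obtain ⟨r, rfl⟩ := hv
    rw [ht, Ideal.span_singleton_pow, Ideal.mem_span_singleton, hfval]
    set a := algebraMap K R (g (σ : R ≃ₐ[K] R)) with ha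
    have hsr : t ∣ (σ : R ≃ₐ[K] R) r - r := by
      have := dvrAux_sub_mem hres (σ : R ≃ₐ[K] R) r
      rwa [ht, Ideal.mem_span_singleton] at this
    have hcalc : (σ : R ≃ₐ[K] R) (t * r) - a * (t * r)
        = (σ : R ≃ₐ[K] R) r * ((σ : R ≃ₐ[K] R) t - a * t)
          + a * t * ((σ : R ≃ₐ[K] R) r - r) := by
      rw [map_mul]; ring
    rw [hcalc]
    refine dvd_add (Dvd.dvd.mul_left (hgUC _) _) ?_
    obtain ⟨s, hs⟩ := hsr
    exact ⟨a * s, by rw [hs]; ring⟩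
  · -- char zero: injective
    intro hchar
    haveI : CharP K 0 := ringChar.of_eq hchar
    haveI : CharZero K := CharP.charP_to_charZero K
    rw [injective_iff_map_eq_one]
    intro σ hσ
    refine key σ ?_ ?_
    · have := congrArg (fun u : Kˣ => (u : K)) hσ
      simpa [hfval] using this
    · exact_mod_cast Nat.cast_ne_zero.2 (orderOf_pos σ).ne'
  · -- char p : kernel elements have p-power order
    intro p hp hchar σ hσker
    haveI : CharP K p := ringChar.of_eq hchar
    have hpp : p.Prime := (CharP.char_is_prime_or_zero K p).resolve_right hp
    set n := orderOf σ with hn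
    have hn0 : n ≠ 0 := (orderOf_pos σ).ne'
    set k := n.factorization p with hk
    refine ⟨k, ?_⟩
    set τ := σ ^ (p ^ k) with hτ
    have hτker : g ((τ : G) : R ≃ₐ[K] R) = 1 := by
      have h1 : f τ = 1 := by
        rw [hτ, map_pow]
        rw [MonoidHom.mem_ker] at hσker
        rw [hσker, one_pow]
      have := congrArg (fun u : Kˣ => (u : K)) h1
      simpa [hfval] using this
    have hdvd : p ^ k ∣ n := Nat.ordProj_dvd n p
    have hordτ : orderOf τ = n / p ^ k := by
      rw [hτ, orderOf_pow, ← hn, Nat.gcd_eq_right hdvd]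
    have hm : ((orderOf τ : ℕ) : K) ≠ 0 := by
      rw [hordτ, Ne, CharP.cast_eq_zero_iff K p]
      exact Nat.not_dvd_ordCompl hpp hn0
    have hτ1 : τ = 1 := key τ hτker hm
    have h1 : n / p ^ k = 1 := by rw [← hordτ, hτ1, orderOf_one]
    have h2 := Nat.ordProj_mul_ordCompl_eq_self n p
    rw [h1, mul_one] at h2
    rw [hk]
    exact h2.symm
end

section
/- Let K be a field and let σ be a K-algebra automorphism of the formal power series ring K⟦X⟧. Then the constant coefficient of σ(X) is 0, the coefficient of X in σ(X) is nonzero, and the assignment σ ↦ (coefficient of X in σ(X)) is a group homomorphism from the group of K-algebra automorphisms of K⟦X⟧ to the multiplicative group Kˣ. -/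
open PowerSeries

private lemma aux_const {K : Type*} [Field K] (σ : PowerSeries K ≃ₐ[K] PowerSeries K) :
    PowerSeries.constantCoeff (R := K) (σ PowerSeries.X) = 0 := by
  by_contra h
  have hu : IsUnit (σ X) := isUnit_iff_constantCoeff.mpr (isUnit_iff_ne_zero.mpr h)
  have hX : IsUnit (X : PowerSeries K) := by
    have := hu.map (σ.symm : PowerSeries K →ₐ[K] PowerSeries K)
    simpa using this
  have := isUnit_iff_constantCoeff.mp hX
  simp at this

private lemma aux_const_eq {K : Type*} [Field K] (σ : PowerSeries K ≃ₐ[K] PowerSeries K)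
    (f : PowerSeries K) : constantCoeff (R := K) (σ f) = constantCoeff (R := K) f := by
  set a := constantCoeff (R := K) f with ha
  obtain ⟨g, hg⟩ : (X : PowerSeries K) ∣ (f - C (R := K) a) := by
    rw [X_dvd_iff]; simp [ha]
  have hf : f = C (R := K) a + X * g := by rw [← hg]; ring
  have : σ f = C (R := K) a + σ X * σ g := by
    rw [hf, map_add, map_mul]
    congr 1
    exact σ.commutes' a
  rw [this]
  simp [aux_const σ]

private lemma coeff_one_mul' {K : Type*} [Field K] (a b : PowerSeries K) :
    coeff (R := K) 1 (a * b) = constantCoeff (R := K) a * coeff (R := K) 1 b + coeff (R := K) 1 a * constantCoeff (R := K) b := by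
  rw [coeff_mul]
  rw [show (Finset.HasAntidiagonal.antidiagonal (1 : ℕ)) = {(0,1),(1,0)} from rfl]
  simp [coeff_zero_eq_constantCoeff]

private lemma aux_mul {K : Type*} [Field K] (σ : PowerSeries K ≃ₐ[K] PowerSeries K)
    (g : PowerSeries K) (hg : constantCoeff (R := K) g = 0) :
    coeff (R := K) 1 (σ g) = coeff (R := K) 1 (σ X) * coeff (R := K) 1 g := by
  obtain ⟨h, hh⟩ : (X : PowerSeries K) ∣ g := X_dvd_iff.mpr hg
  have h1 : coeff (R := K) 1 g = constantCoeff (R := K) h := by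
    rw [hh, coeff_one_mul']; simp
  rw [hh, map_mul, coeff_one_mul', aux_const σ, aux_const_eq σ h, ← hh, h1]
  ring

private lemma aux_ne {K : Type*} [Field K] (σ : PowerSeries K ≃ₐ[K] PowerSeries K) :
    coeff (R := K) 1 (σ X) ≠ 0 := by
  intro h
  have h0 : constantCoeff (R := K) (σ.symm X) = 0 := aux_const σ.symm
  have := aux_mul σ (σ.symm X) h0
  rw [σ.apply_symm_apply] at this
  simp [h] at this

/-- Let `K` be a field and let `σ` be a `K`-algebra automorphism of the formal power
series ring `K⟦X⟧`. Then the constant coefficient of `σ(X)` is `0`, the coefficient of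
`X` in `σ(X)` is nonzero, and `σ ↦ (coefficient of X in σ(X))` is a group homomorphism
from the group of `K`-algebra automorphisms of `K⟦X⟧` to `Kˣ`. -/
theorem powerSeries_aut_coeff_one (K : Type*) [Field K] :
    (∀ σ : PowerSeries K ≃ₐ[K] PowerSeries K,
      PowerSeries.constantCoeff (R := K) (σ PowerSeries.X) = 0 ∧
      PowerSeries.coeff (R := K) 1 (σ PowerSeries.X) ≠ 0) ∧
    ∃ f : (PowerSeries K ≃ₐ[K] PowerSeries K) →* Kˣ,
      ∀ σ : PowerSeries K ≃ₐ[K] PowerSeries K,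
        (f σ : K) = PowerSeries.coeff (R := K) 1 (σ PowerSeries.X) := by
  refine ⟨fun σ => ⟨aux_const σ, aux_ne σ⟩, ?_⟩
  refine ⟨MonoidHom.mk' (fun σ => Units.mk0 (coeff (R := K) 1 (σ X)) (aux_ne σ)) ?_, fun σ => rfl⟩
  intro σ τ
  ext
  show coeff (R := K) 1 ((σ * τ) X) = coeff (R := K) 1 (σ X) * coeff (R := K) 1 (τ X)
  have : (σ * τ) X = σ (τ X) := rfl
  rw [this, aux_mul σ (τ X) (aux_const τ)]
end

section
/- Let K be a field and let σ be a K-algebra automorphism of the formal power series ring K⟦X⟧. Then for every power series f ∈ K⟦X⟧, σ(f) equals the substitution of σ(X) into f, i.e. σ(f) = f(σ(X)). (Every K-algebra automorphism of K⟦X⟧ is the substitution map determined by σ(X).) -/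
open scoped Classical

/-- Substitution of the power series `g` (with zero constant term) into the power
series `f`, i.e. the power series `f(g)`.  Since `g` has zero constant coefficient,
`g ^ n` has no terms of degree `< n`, so the coefficient of `X ^ d` in `f(g)` is the
finite sum `∑_{n ≤ d} (coeff n f) * (coeff d (g ^ n))`. -/
noncomputable def PowerSeries.substitute {K : Type*} [Field K]
    (g f : PowerSeries K) : PowerSeries K :=
  PowerSeries.mk fun d =>
    ∑ n ∈ Finset.range (d + 1), PowerSeries.coeff n f * PowerSeries.coeff d (g ^ n)

/-- Every `K`-algebra automorphism `σ` of `K⟦X⟧` is the substitution map determined by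
`σ(X)`: for every power series `f`, `σ(f) = f(σ(X))`. -/
theorem powerSeries_aut_eq_subst (K : Type*) [Field K]
    (σ : PowerSeries K ≃ₐ[K] PowerSeries K) (f : PowerSeries K) :
    σ f = PowerSeries.substitute (σ PowerSeries.X) f := by
  have hXdvd : (PowerSeries.X : PowerSeries K) ∣ σ PowerSeries.X := by
    rw [PowerSeries.X_dvd_iff]
    by_contra h
    have hu : IsUnit (σ PowerSeries.X) :=
      PowerSeries.isUnit_iff_constantCoeff.mpr (isUnit_iff_ne_zero.mpr h)
    have hXu : IsUnit (PowerSeries.X : PowerSeries K) := by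
      have := hu.map σ.symm.toAlgHom
      simpa using this
    have : PowerSeries.constantCoeff (PowerSeries.X : PowerSeries K) ≠ 0 := by
      exact isUnit_iff_ne_zero.mp (PowerSeries.isUnit_iff_constantCoeff.mp hXu)
    simp at this
  ext d
  set S : PowerSeries K :=
    ∑ n ∈ Finset.range (d + 1), (PowerSeries.coeff n f) • PowerSeries.X ^ n with hS
  have key : PowerSeries.X ^ (d + 1) ∣ f - S := by
    rw [PowerSeries.X_pow_dvd_iff]
    intro m hm
    have hmem : m ∈ Finset.range (d + 1) := Finset.mem_range.mpr hm
    simp only [hS, map_sub, map_sum, PowerSeries.coeff_smul, PowerSeries.coeff_X_pow,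
      smul_eq_mul, mul_ite, mul_one, mul_zero]
    rw [Finset.sum_ite_eq (Finset.range (d + 1)) m (fun n => PowerSeries.coeff n f)]
    simp [hmem]
  obtain ⟨h, hh⟩ := key
  have hf : f = S + PowerSeries.X ^ (d + 1) * h := by
    rw [← hh]; ring
  have hσf : σ f = (∑ n ∈ Finset.range (d + 1),
      (PowerSeries.coeff n f) • (σ PowerSeries.X) ^ n)
      + (σ PowerSeries.X) ^ (d + 1) * σ h := by
    rw [show σ f = σ (S + PowerSeries.X ^ (d + 1) * h) from congrArg σ hf]
    simp [hS, map_add, map_mul, map_pow, map_sum]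
  have hz : PowerSeries.coeff d ((σ PowerSeries.X) ^ (d + 1) * σ h) = 0 := by
    have : (PowerSeries.X : PowerSeries K) ^ (d + 1) ∣ (σ PowerSeries.X) ^ (d + 1) * σ h :=
      dvd_mul_of_dvd_left (pow_dvd_pow_of_dvd hXdvd _) _
    exact (PowerSeries.X_pow_dvd_iff.mp this) d (Nat.lt_succ_self d)
  rw [hσf, map_add, hz, add_zero, map_sum, PowerSeries.substitute, PowerSeries.coeff_mk]
  simp [PowerSeries.coeff_smul]
end

section
/- Let K be a field and let σ be a K-algebra automorphism of the formal power series ring K⟦X⟧. Suppose σ^m is the identity for some integer m ≥ 1 with (m : K) ≠ 0 (i.e. the characteristic of K does not divide m), and suppose the coefficient of X in σ(X) equals 1. Then σ is the identity automorphism. -/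
open PowerSeries Finset

section Aux

variable {K : Type*} [Field K]

private lemma aux_sigma_C (σ : PowerSeries K ≃ₐ[K] PowerSeries K) (a : K) :
    σ (C a) = C a := by
  have h := σ.commutes a
  simpa [PowerSeries.algebraMap_apply] using h

private lemma aux_constCoeff (σ : PowerSeries K ≃ₐ[K] PowerSeries K) :
    constantCoeff (σ X) = 0 := by
  by_contra h
  have hu : IsUnit (σ X) :=
    PowerSeries.isUnit_iff_constantCoeff.mpr (isUnit_iff_ne_zero.mpr h)
  have hX : IsUnit (X : PowerSeries K) := by
    have := hu.map σ.symm.toAlgHom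
    simpa using this
  rw [PowerSeries.isUnit_iff_constantCoeff] at hX
  simp [constantCoeff_X] at hX

/-- key continuity formula -/
private lemma aux_key (σ : PowerSeries K ≃ₐ[K] PowerSeries K) (f : PowerSeries K) (n : ℕ) :
    coeff n (σ f) = ∑ i ∈ range (n + 1), coeff i f * coeff n ((σ X) ^ i) := by
  set g := σ X with hg
  have hg0 : constantCoeff g = 0 := aux_constCoeff σ
  have hXg : (X : PowerSeries K) ∣ g := X_dvd_iff.mpr hg0
  set T : PowerSeries K := ∑ i ∈ range (n + 1), C (coeff i f) * X ^ i with hT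
  have hdvd : X ^ (n + 1) ∣ f - T := by
    rw [X_pow_dvd_iff]
    intro i hi
    have hcT : coeff i T = coeff i f := by
      simp only [hT, map_sum, coeff_C_mul, coeff_X_pow, mul_ite, mul_one, mul_zero]
      rw [Finset.sum_ite_eq (range (n + 1)) i (fun j => coeff j f)]
      simp [mem_range, hi]
    simp [hcT]
  obtain ⟨q, hq⟩ := hdvd
  have hf : f = T + X ^ (n + 1) * q := by rw [← hq]; ring
  have hσT : σ T = ∑ i ∈ range (n + 1), C (coeff i f) * g ^ i := by
    rw [hT, map_sum]
    refine Finset.sum_congr rfl fun i _ => ?_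
    rw [map_mul, map_pow, aux_sigma_C]
  have hzero : coeff n (σ (X ^ (n + 1) * q)) = 0 := by
    have : X ^ (n + 1) ∣ σ (X ^ (n + 1) * q) := by
      rw [map_mul, map_pow]
      exact Dvd.dvd.mul_right (pow_dvd_pow_of_dvd hXg (n + 1)) _
    exact X_pow_dvd_iff.mp this n (Nat.lt_succ_self n)
  calc coeff n (σ f) = coeff n (σ T) + coeff n (σ (X ^ (n + 1) * q)) := by
        rw [hf, map_add, map_add]
    _ = coeff n (σ T) := by rw [hzero, add_zero]
    _ = ∑ i ∈ range (n + 1), coeff i f * coeff n (g ^ i) := by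
        rw [hσT, map_sum]
        exact Finset.sum_congr rfl fun i _ => coeff_C_mul _ _ _

private lemma aux_coeff_pow (g : PowerSeries K) (hg0 : constantCoeff g = 0) (n : ℕ) :
    coeff n (g ^ n) = (coeff 1 g) ^ n := by
  obtain ⟨h, hh⟩ := X_dvd_iff.mpr hg0
  have h1 : coeff 1 g = constantCoeff h := by
    rw [hh]
    simpa using coeff_succ_X_mul 0 h
  rw [h1, hh, mul_pow]
  have : coeff n (X ^ n * h ^ n) = coeff 0 (h ^ n) := by
    simpa using coeff_X_pow_mul (h ^ n) n 0
  rw [this, coeff_zero_eq_constantCoeff, map_pow]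

private lemma aux_coeff_pow_lt (g : PowerSeries K) (hg0 : constantCoeff g = 0)
    {i l : ℕ} (hil : i < l) : coeff i (g ^ l) = 0 := by
  have : (X : PowerSeries K) ^ l ∣ g ^ l := pow_dvd_pow_of_dvd (X_dvd_iff.mpr hg0) l
  exact X_pow_dvd_iff.mp this i hil

end Aux

/-- Let `σ` be a `K`-algebra automorphism of `K⟦X⟧`.  If `σ ^ m = 1` for some `m ≥ 1`
with `(m : K) ≠ 0` (i.e. the characteristic of `K` does not divide `m`) and the
coefficient of `X` in `σ(X)` equals `1`, then `σ` is the identity automorphism. -/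
theorem powerSeries_aut_eq_one (K : Type*) [Field K]
    (σ : PowerSeries K ≃ₐ[K] PowerSeries K) (m : ℕ) (hm : 1 ≤ m) (hmK : (m : K) ≠ 0)
    (hσm : σ ^ m = 1) (h1 : PowerSeries.coeff 1 (σ PowerSeries.X) = 1) :
    σ = 1 := by
  classical
  set g := σ X with hg
  have hg0 : constantCoeff g = 0 := aux_constCoeff σ
  -- Step 1 : σ X = X
  have hgX : g = X := by
    by_contra hne
    have hex : ∃ k, coeff k (g - X) ≠ 0 := by
      by_contra h
      push_neg at h
      exact hne (sub_eq_zero.mp (PowerSeries.ext fun n => by simpa using h n))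
    set k := Nat.find hex with hkdef
    have hk : coeff k (g - X) ≠ 0 := Nat.find_spec hex
    have hmin : ∀ i < k, coeff i (g - X) = 0 := by
      intro i hi
      by_contra h
      have hle : k ≤ i := Nat.find_le h
      omega
    clear_value k
    have hk2 : 2 ≤ k := by
      by_contra hlt
      interval_cases k
      · simp [map_sub, coeff_zero_eq_constantCoeff, hg0, constantCoeff_X] at hk
      · simp [map_sub, h1, coeff_X] at hk
    have hcoeffX : ∀ i < k, coeff i g = coeff i X := fun i hi =>
      sub_eq_zero.mp (by simpa [map_sub] using hmin i hi)
    have hkne1 : k ≠ 1 := by omega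
    set c := coeff k g with hc
    have hck : coeff k (g - X) = c := by
      simp [map_sub, coeff_X, hc, hkne1]
    have hcne : c ≠ 0 := by rw [← hck]; exact hk
    -- the coefficient computation for one application of σ
    have step : ∀ h : PowerSeries K,
        (∀ i < k, coeff i h = coeff i X) →
        (∀ i < k, coeff i (σ h) = coeff i X) ∧
          coeff k (σ h) = c + coeff k h := by
      intro h hlow
      have hsum : ∀ n : ℕ, n ≤ k →
          coeff n (σ h) = (∑ l ∈ range (min (n + 1) k),
            coeff l X * coeff n (g ^ l)) +
            (if n = k then coeff k h * coeff n (g ^ k) else 0) := by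
        intro n hn
        rw [aux_key]
        rcases lt_or_eq_of_le hn with hlt | heq
        · rw [min_eq_left (by omega), if_neg (by omega), add_zero]
          exact Finset.sum_congr rfl fun l hl => by
            rw [hlow l (lt_of_lt_of_le (mem_range.mp hl) (by omega))]
        · subst heq
          rw [min_eq_right (by omega), Finset.sum_range_succ, if_pos rfl]
          congr 1
          exact Finset.sum_congr rfl fun l hl => by rw [hlow l (mem_range.mp hl)]
      have hsum2 : ∀ n : ℕ, ∀ N, 2 ≤ N → N ≤ k →
          (∑ l ∈ range N, coeff l X * coeff n (g ^ l)) = coeff n g := by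
        intro n N hN2 hNk
        simp only [coeff_X, ite_mul, one_mul, zero_mul]
        rw [Finset.sum_ite_eq' (range N) 1 (fun l => coeff n (g ^ l))]
        simp [mem_range, (by omega : 1 < N), pow_one]
      constructor
      · intro i hi
        rw [hsum i (by omega), min_eq_left (by omega), if_neg (by omega), add_zero]
        rcases Nat.eq_zero_or_pos i with h0 | h0
        · subst h0
          simp [coeff_X, coeff_zero_eq_constantCoeff]
        · rw [hsum2 i (i + 1) (by omega) (by omega)]
          exact hcoeffX i hi
      · rw [hsum k le_rfl, min_eq_right (by omega), if_pos rfl,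
          hsum2 k k hk2 le_rfl, aux_coeff_pow g hg0, h1, one_pow, mul_one, ← hc]
    -- iterate
    have claim : ∀ j : ℕ, (∀ i < k, coeff i ((σ ^ j) X) = coeff i X) ∧
        coeff k ((σ ^ j) X) = (j : K) * c := by
      intro j
      induction j with
      | zero =>
        constructor
        · intro i _; rfl
        · simp [coeff_X, hkne1]
      | succ j ih =>
        have hpow : (σ ^ (j + 1)) X = σ ((σ ^ j) X) := by
          rw [pow_succ']; rfl
        obtain ⟨ih1, ih2⟩ := ih
        obtain ⟨s1, s2⟩ := step ((σ ^ j) X) ih1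
        constructor
        · intro i hi; rw [hpow]; exact s1 i hi
        · rw [hpow, s2, ih2]
          push_cast
          ring
    have hfinal := (claim m).2
    have hXm : (σ ^ m) X = X := by rw [hσm]; rfl
    rw [hXm, coeff_X, if_neg (by omega)] at hfinal
    exact hcne (by
      have := hfinal.symm
      rcases mul_eq_zero.mp this with h | h
      · exact absurd h hmK
      · exact h)
  -- Step 2 : σ = 1
  refine AlgEquiv.ext fun f => ?_
  refine PowerSeries.ext fun n => ?_
  rw [aux_key, ← hg, hgX]
  simp only [coeff_X_pow, mul_ite, mul_one, mul_zero]
  rw [Finset.sum_ite_eq (range (n + 1)) n (fun j => coeff j f)]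
  simp [mem_range, AlgEquiv.one_apply]
end

section
/- Let K be a field with char K ≠ 2, and let G be a finite subgroup of the group of K-algebra automorphisms of the formal power series ring K⟦X⟧ such that σ ∘ σ is the identity for every σ ∈ G (i.e. G is an elementary abelian 2-group). Then the cardinality of G is at most 2. -/
open PowerSeries

namespace PowerSeriesAutAux

variable {K : Type*} [Field K]

private lemma constCoeff_apply_X (σ : PowerSeries K ≃ₐ[K] PowerSeries K) :
    constantCoeff (σ X) = 0 := by
  by_contra h
  have hu : IsUnit (σ X) := isUnit_iff_constantCoeff.mpr (isUnit_iff_ne_zero.mpr h)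
  have hX : IsUnit (X : K⟦X⟧) := by
    have := hu.map σ.symm
    simpa using this
  have := isUnit_constantCoeff _ hX
  simp [constantCoeff_X] at this

private lemma X_dvd_apply_X (σ : PowerSeries K ≃ₐ[K] PowerSeries K) :
    (X : K⟦X⟧) ∣ σ X := X_dvd_iff.mpr (constCoeff_apply_X σ)

private lemma coe_eq_aeval (P : Polynomial K) :
    (P : K⟦X⟧) = Polynomial.aeval (X : K⟦X⟧) P := by
  have halg : algebraMap K K⟦X⟧ = C := RingHom.ext fun r => C_eq_algebraMap.symm
  rw [Polynomial.aeval_def, halg]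
  exact (Polynomial.eval₂_C_X_eq_coe (φ := P)).symm

private lemma map_coe (σ : PowerSeries K ≃ₐ[K] PowerSeries K) (P : Polynomial K) :
    σ (P : K⟦X⟧) = Polynomial.aeval (σ X) P := by
  rw [coe_eq_aeval]
  exact (Polynomial.aeval_algHom_apply σ X P).symm

private lemma coeff_apply (σ : PowerSeries K ≃ₐ[K] PowerSeries K) (f : K⟦X⟧) (k : ℕ) :
    coeff k (σ f) = coeff k (Polynomial.aeval (σ X) (trunc (k + 1) f)) := by
  have hdvd : (X : K⟦X⟧) ^ (k + 1) ∣ f - (trunc (k + 1) f : Polynomial K) := by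
    rw [X_pow_dvd_iff]
    intro m hm
    rw [map_sub, Polynomial.coeff_coe, coeff_trunc, if_pos hm, sub_self]
  obtain ⟨g, hg⟩ := hdvd
  have key : σ f - Polynomial.aeval (σ X) (trunc (k + 1) f) = (σ X) ^ (k + 1) * σ g := by
    rw [← map_coe, ← map_sub, hg, map_mul, map_pow]
  have hdvd2 : (X : K⟦X⟧) ^ (k + 1) ∣ σ f - Polynomial.aeval (σ X) (trunc (k + 1) f) := by
    rw [key]
    exact Dvd.dvd.mul_right (pow_dvd_pow_of_dvd (X_dvd_apply_X σ) (k + 1)) _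
  have h0 := (X_pow_dvd_iff.mp hdvd2) k (Nat.lt_succ_self k)
  rw [map_sub] at h0
  exact sub_eq_zero.mp h0

private lemma coeff_pow_self (g : K⟦X⟧) (hg : constantCoeff g = 0) (n : ℕ) :
    coeff n (g ^ n) = (coeff 1 g) ^ n := by
  obtain ⟨h, rfl⟩ := X_dvd_iff.mpr hg
  have h1 : coeff 1 ((X : K⟦X⟧) * h) = constantCoeff h := by
    simpa using coeff_succ_X_mul 0 h
  have h2 : coeff n (((X : K⟦X⟧) * h) ^ n) = coeff 0 (h ^ n) := by
    rw [mul_pow]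
    simpa using coeff_X_pow_mul (h ^ n) n 0
  rw [h1, h2, coeff_zero_eq_constantCoeff, map_pow]

private lemma coeff_one_apply_mul (σ τ : PowerSeries K ≃ₐ[K] PowerSeries K) :
    coeff 1 ((σ * τ) X) = coeff 1 (σ X) * coeff 1 (τ X) := by
  have hst : (σ * τ) X = σ (τ X) := rfl
  have htr : trunc 2 (τ X) = Polynomial.C (coeff 1 (τ X)) * Polynomial.X := by
    apply Polynomial.ext
    intro m
    rw [coeff_trunc]
    match m with
    | 0 => simp [coeff_zero_eq_constantCoeff, constCoeff_apply_X]
    | 1 => simp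
    | (m + 2) =>
      rw [if_neg (by omega)]
      simp [Polynomial.coeff_X, Nat.succ_ne_zero, eq_comm]
  rw [hst, coeff_apply σ (τ X) 1, htr, map_mul, Polynomial.aeval_C, Polynomial.aeval_X,
    ← C_eq_algebraMap, coeff_C_mul, mul_comm]

private lemma apply_X_eq (h2 : (2 : K) ≠ 0) (σ : PowerSeries K ≃ₐ[K] PowerSeries K)
    (hσ : σ * σ = 1) (h1 : coeff 1 (σ X) = 1) : σ X = X := by
  ext n
  induction n using Nat.strong_induction_on with
  | _ n ih =>
    match n with
    | 0 => simp [coeff_zero_eq_constantCoeff, constCoeff_apply_X, constantCoeff_X]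
    | 1 => simp [h1]
    | (m + 2) =>
      set n := m + 2 with hn
      set c := coeff n (σ X) with hcdef
      have hn1 : n ≠ 1 := by omega
      have htr : trunc (n + 1) (σ X) = Polynomial.X + Polynomial.C c * Polynomial.X ^ n := by
        apply Polynomial.ext
        intro j
        rw [coeff_trunc]
        by_cases hj : j < n + 1
        · rw [if_pos hj]
          rcases lt_or_eq_of_le (Nat.lt_succ_iff.mp hj) with hlt | heq
          · rw [ih j hlt]
            have hjn : j ≠ n := Nat.ne_of_lt hlt
            simp [Polynomial.coeff_X, coeff_X, Polynomial.coeff_X_pow, hjn, eq_comm]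
          · subst heq
            simp only [Polynomial.coeff_add, Polynomial.coeff_X, Polynomial.coeff_C_mul,
              Polynomial.coeff_X_pow, if_pos rfl, if_neg (fun h : (1 : ℕ) = n => hn1 h.symm),
              mul_one, zero_add]
            simpa using hcdef.symm
        · rw [if_neg hj]
          have hj1 : j ≠ 1 := by omega
          have hjn : j ≠ n := by omega
          simp [Polynomial.coeff_X, Polynomial.coeff_X_pow, hj1, hjn, eq_comm]
      have hXfix : σ (σ X) = X := by
        have := congrArg (fun e : PowerSeries K ≃ₐ[K] PowerSeries K => e X) hσ
        simpa [AlgEquiv.mul_apply] using this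
      have hpow : coeff n ((σ X) ^ n) = 1 := by
        rw [coeff_pow_self (σ X) (constCoeff_apply_X σ), h1, one_pow]
      have hcalc : coeff n (σ (σ X)) = c + c := by
        rw [coeff_apply σ (σ X) n, htr]
        simp only [map_add, map_mul, Polynomial.aeval_X, Polynomial.aeval_C, map_pow]
        rw [← C_eq_algebraMap, coeff_C_mul, hpow, mul_one]
      have hc0 : c + c = 0 := by
        rw [← hcalc, hXfix, coeff_X, if_neg hn1]
      have h2c : (2 : K) * c = 0 := by rw [two_mul]; exact hc0
      have hc : c = 0 := by
        rcases mul_eq_zero.mp h2c with h | h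
        · exact absurd h h2
        · exact h
      rw [coeff_X, if_neg hn1]
      exact hc

private lemma eq_one_of_X_fixed (σ : PowerSeries K ≃ₐ[K] PowerSeries K) (h : σ X = X) :
    σ = 1 := by
  apply AlgEquiv.ext
  intro f
  apply PowerSeries.ext
  intro k
  have : coeff k (σ f) = coeff k f := by
    rw [coeff_apply σ f k, h, ← coe_eq_aeval, Polynomial.coeff_coe, coeff_trunc,
      if_pos (Nat.lt_succ_self k)]
  simpa using this

end PowerSeriesAutAux

open PowerSeriesAutAux in
/-- Let `K` be a field with `char K ≠ 2` and let `G` be a finite subgroup of the group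
of `K`-algebra automorphisms of `K⟦X⟧` such that `σ ∘ σ` is the identity for every
`σ ∈ G` (i.e. `G` is an elementary abelian `2`-group).  Then `#G ≤ 2`. -/
theorem powerSeries_aut_two_torsion_card (K : Type*) [Field K] (hK : ringChar K ≠ 2)
    (G : Subgroup (PowerSeries K ≃ₐ[K] PowerSeries K)) [Finite G]
    (hG : ∀ σ ∈ G, σ * σ = 1) :
    Nat.card G ≤ 2 := by
  classical
  have h2 : (2 : K) ≠ 0 := Ring.two_ne_zero hK
  set c : G → K := fun σ => PowerSeries.coeff 1 (σ.1 PowerSeries.X) with hc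
  have hsq : ∀ σ : G, c σ * c σ = 1 := by
    intro σ
    have h := hG σ.1 σ.2
    have hmul := coeff_one_apply_mul σ.1 σ.1
    rw [h] at hmul
    simpa [hc, PowerSeries.coeff_one_X, AlgEquiv.one_apply] using hmul.symm
  have hinj : Function.Injective c := by
    intro σ τ h
    have hτ2 := hG τ.1 τ.2
    have hmem : σ.1 * τ.1 ∈ G := G.mul_mem σ.2 τ.2
    have hmul2 := hG _ hmem
    have hcm : PowerSeries.coeff 1 ((σ.1 * τ.1) PowerSeries.X) = 1 := by
      rw [coeff_one_apply_mul]
      have : c σ * c τ = 1 := by rw [h]; exact hsq τ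
      exact this
    have hX1 : (σ.1 * τ.1) PowerSeries.X = PowerSeries.X := apply_X_eq h2 _ hmul2 hcm
    have hone : σ.1 * τ.1 = 1 := eq_one_of_X_fixed _ hX1
    have hval : σ.1 = τ.1 := by
      calc σ.1 = σ.1 * (τ.1 * τ.1) := by rw [hτ2, mul_one]
        _ = (σ.1 * τ.1) * τ.1 := (mul_assoc _ _ _).symm
        _ = τ.1 := by rw [hone, one_mul]
    exact Subtype.ext hval
  have himg : ∀ σ : G, c σ ∈ ({1, -1} : Finset K) := by
    intro σ
    rcases mul_self_eq_one_iff.mp (hsq σ) with h | h <;> simp [h]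
  let f : G → ({1, -1} : Finset K) := fun σ => ⟨c σ, himg σ⟩
  have hfinj : Function.Injective f := fun a b hab => hinj (congrArg Subtype.val hab)
  have hle := Nat.card_le_card_of_injective f hfinj
  have hcard : Nat.card ({1, -1} : Finset K) ≤ 2 := by
    rw [Nat.card_eq_finsetCard]
    exact le_trans (Finset.card_insert_le _ _) (by simp)
  exact le_trans hle hcard
end

section
/- Let K be a field of characteristic 0. Then every finite subgroup of the group of K-algebra automorphisms of the formal power series ring K⟦X⟧ is cyclic. -/
open PowerSeries

namespace PowerSeriesAutCyclicAux

variable {K : Type*} [Field K]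

theorem constantCoeff_sigma_X (σ : PowerSeries K ≃ₐ[K] PowerSeries K) :
    constantCoeff (σ X) = 0 := by
  by_contra h
  have hu : IsUnit (σ X) := isUnit_iff_constantCoeff.mpr (isUnit_iff_ne_zero.mpr h)
  have hX : IsUnit (X : K⟦X⟧) := by
    have := hu.map σ.symm
    simpa using this
  have := isUnit_iff_constantCoeff.mp hX
  simp at this

theorem X_dvd_sigma_X (σ : PowerSeries K ≃ₐ[K] PowerSeries K) : (X : K⟦X⟧) ∣ σ X :=
  X_dvd_iff.mpr (constantCoeff_sigma_X σ)

theorem X_pow_dvd_map (σ : PowerSeries K ≃ₐ[K] PowerSeries K) {n : ℕ} {f : K⟦X⟧}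
    (h : (X : K⟦X⟧) ^ n ∣ f) : (X : K⟦X⟧) ^ n ∣ σ f := by
  obtain ⟨g, rfl⟩ := h
  rw [map_mul, map_pow]
  exact dvd_mul_of_dvd_left (pow_dvd_pow_of_dvd (X_dvd_sigma_X σ) n) _

theorem X_pow_dvd_map_sub (σ : PowerSeries K ≃ₐ[K] PowerSeries K) {n : ℕ} {f g : K⟦X⟧}
    (h : (X : K⟦X⟧) ^ n ∣ f - g) : (X : K⟦X⟧) ^ n ∣ σ f - σ g := by
  rw [← map_sub]
  exact X_pow_dvd_map σ h

theorem sigma_C (σ : PowerSeries K ≃ₐ[K] PowerSeries K) (a : K) : σ (C a) = C a := by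
  have : (C a : K⟦X⟧) = algebraMap K K⟦X⟧ a := by
    rw [PowerSeries.algebraMap_apply]; simp
  rw [this, AlgEquiv.commutes]

theorem constantCoeff_map (σ : PowerSeries K ≃ₐ[K] PowerSeries K) (f : K⟦X⟧) :
    constantCoeff (σ f) = constantCoeff f := by
  set a := constantCoeff f with ha
  have h : (X : K⟦X⟧) ∣ f - C a := by
    rw [X_dvd_iff, map_sub, constantCoeff_C, ← ha, sub_self]
  have h2 : (X : K⟦X⟧) ∣ σ f - C a := by
    have := X_pow_dvd_map_sub σ (n := 1) (by simpa using h)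
    rw [sigma_C] at this
    simpa using this
  have := X_dvd_iff.mp h2
  rw [map_sub, constantCoeff_C] at this
  linear_combination this

theorem coeff_one_map (σ : PowerSeries K ≃ₐ[K] PowerSeries K) (f : K⟦X⟧) :
    coeff 1 (σ f) = coeff 1 f * coeff 1 (σ X) := by
  set a := constantCoeff f
  set b := coeff 1 f
  have h : (X : K⟦X⟧) ^ 2 ∣ f - (C a + C b * X) := by
    rw [X_pow_dvd_iff]
    intro m hm
    interval_cases m <;>
      simp [map_sub, map_add, coeff_zero_eq_constantCoeff, a, b]
  have h2 := X_pow_dvd_map_sub σ h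
  rw [map_add, map_mul, sigma_C, sigma_C] at h2
  have h3 := X_pow_dvd_iff.mp h2 1 (by norm_num)
  simp only [map_sub, map_add, map_mul] at h3
  rw [coeff_C] at h3
  simp only [one_ne_zero, if_false, zero_add] at h3
  have hb : coeff 1 (C b * σ X) = b * coeff 1 (σ X) := by
    rw [← smul_eq_C_mul, map_smul, smul_eq_mul]
  rw [hb] at h3
  linear_combination h3

/-- If `X^k ∣ g` with `k ≥ 2`, then `σ g ≡ g mod X^(k+1)`. -/
theorem sigma_sub_self (σ : PowerSeries K ≃ₐ[K] PowerSeries K) {k : ℕ} (hk : 2 ≤ k)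
    (hgk : (X : K⟦X⟧) ^ k ∣ σ X - X) {g : K⟦X⟧} (hg : (X : K⟦X⟧) ^ k ∣ g) :
    (X : K⟦X⟧) ^ (k + 1) ∣ σ g - g := by
  obtain ⟨u, rfl⟩ := hg
  have hpow : (X : K⟦X⟧) ^ (k + 1) ∣ (σ X) ^ k - X ^ k := by
    have hfac : (σ X) ^ k - X ^ k =
        (∑ i ∈ Finset.range k, (σ X) ^ i * X ^ (k - 1 - i)) * (σ X - X) := by
      rw [geom_sum₂_mul]
    rw [hfac]
    have hsum : (X : K⟦X⟧) ^ (k - 1) ∣ ∑ i ∈ Finset.range k, (σ X) ^ i * X ^ (k - 1 - i) := by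
      refine Finset.dvd_sum fun i hi => ?_
      have hi' : i < k := Finset.mem_range.mp hi
      have h1 : (X : K⟦X⟧) ^ i ∣ (σ X) ^ i := pow_dvd_pow_of_dvd (X_dvd_sigma_X σ) i
      have : (X : K⟦X⟧) ^ (k - 1) = X ^ i * X ^ (k - 1 - i) := by
        rw [← pow_add]
        congr 1
        omega
      rw [this]
      exact mul_dvd_mul h1 dvd_rfl
    have : (X : K⟦X⟧) ^ (k - 1) * X ^ k ∣
        (∑ i ∈ Finset.range k, (σ X) ^ i * X ^ (k - 1 - i)) * (σ X - X) :=
      mul_dvd_mul hsum hgk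
    refine dvd_trans ?_ this
    rw [← pow_add]
    exact pow_dvd_pow _ (by omega)
  have heq : σ (X ^ k * u) - X ^ k * u =
      ((σ X) ^ k - X ^ k) * σ u + X ^ k * (σ u - u) := by
    rw [map_mul, map_pow]
    ring
  rw [heq]
  refine dvd_add (dvd_mul_of_dvd_left hpow _) ?_
  have hu : (X : K⟦X⟧) ∣ σ u - u := by
    rw [X_dvd_iff, map_sub, constantCoeff_map, sub_self]
  have : (X : K⟦X⟧) ^ (k + 1) = X ^ k * X := by rw [pow_succ]
  rw [this]
  exact mul_dvd_mul dvd_rfl hu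

theorem iterate_congr (σ : PowerSeries K ≃ₐ[K] PowerSeries K) {k : ℕ} (hk : 2 ≤ k)
    (hgk : (X : K⟦X⟧) ^ k ∣ σ X - X) (m : ℕ) :
    (X : K⟦X⟧) ^ (k + 1) ∣ (σ ^ m) X - (X + (m : K⟦X⟧) * (σ X - X)) := by
  induction m with
  | zero => simp
  | succ m ih =>
    have hstep : (σ ^ (m + 1)) X = σ ((σ ^ m) X) := by
      rw [pow_succ']
      rfl
    rw [hstep]
    have h1 : (X : K⟦X⟧) ^ (k + 1) ∣ σ ((σ ^ m) X) - σ (X + (m : K⟦X⟧) * (σ X - X)) :=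
      X_pow_dvd_map_sub σ ih
    have h2 : σ (X + (m : K⟦X⟧) * (σ X - X)) =
        σ X + (m : K⟦X⟧) * σ (σ X - X) := by
      rw [map_add, map_mul, map_natCast]
    have h3 : (X : K⟦X⟧) ^ (k + 1) ∣ σ (σ X - X) - (σ X - X) :=
      sigma_sub_self σ hk hgk hgk
    have h4 : (X : K⟦X⟧) ^ (k + 1) ∣ (m : K⟦X⟧) * (σ (σ X - X) - (σ X - X)) :=
      Dvd.dvd.mul_left h3 _
    have key : σ ((σ ^ m) X) - (X + ((m : ℕ) + 1 : K⟦X⟧) * (σ X - X)) =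
        (σ ((σ ^ m) X) - σ (X + (m : K⟦X⟧) * (σ X - X))) +
          (m : K⟦X⟧) * (σ (σ X - X) - (σ X - X)) +
          (σ (X + (m : K⟦X⟧) * (σ X - X)) - (m : K⟦X⟧) * (σ (σ X - X) - (σ X - X)) -
            (X + ((m : ℕ) + 1 : K⟦X⟧) * (σ X - X))) := by ring
    have h5 : σ (X + (m : K⟦X⟧) * (σ X - X)) - (m : K⟦X⟧) * (σ (σ X - X) - (σ X - X)) -
        (X + ((m : ℕ) + 1 : K⟦X⟧) * (σ X - X)) = 0 := by
      rw [h2]; ring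
    have : (↑(m + 1) : K⟦X⟧) = ((m : ℕ) + 1 : K⟦X⟧) := by push_cast; ring
    rw [this, key, h5, add_zero]
    exact dvd_add h1 h4

theorem step_dvd [CharZero K] (σ : PowerSeries K ≃ₐ[K] PowerSeries K) {n : ℕ} (hn : n ≠ 0)
    (hσn : σ ^ n = 1) {k : ℕ} (hk : 2 ≤ k) (hgk : (X : K⟦X⟧) ^ k ∣ σ X - X) :
    (X : K⟦X⟧) ^ (k + 1) ∣ σ X - X := by
  have h := iterate_congr σ hk hgk n
  rw [hσn] at h
  have h1 : (1 : PowerSeries K ≃ₐ[K] PowerSeries K) X = X := rfl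
  rw [h1] at h
  have h2 : (X : K⟦X⟧) - (X + (n : K⟦X⟧) * (σ X - X)) = -((n : K⟦X⟧) * (σ X - X)) := by ring
  rw [h2, dvd_neg] at h
  have hu : IsUnit (C (n : K)) := by
    refine isUnit_iff_constantCoeff.mpr ?_
    simp only [constantCoeff_C]
    exact isUnit_iff_ne_zero.mpr (Nat.cast_ne_zero.mpr hn)
  have hn' : ((n : ℕ) : K⟦X⟧) = C (n : K) := (map_natCast (C (R := K)) n).symm
  rw [hn'] at h
  have hg : σ X - X = (↑hu.unit⁻¹ : K⟦X⟧) * (C (n : K) * (σ X - X)) := by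
    calc σ X - X = 1 * (σ X - X) := (one_mul _).symm
      _ = (↑hu.unit⁻¹ * ↑hu.unit) * (σ X - X) := by rw [Units.inv_mul]
      _ = (↑hu.unit⁻¹ : K⟦X⟧) * (C (n : K) * (σ X - X)) := by rw [mul_assoc, hu.unit_spec]
  rw [hg]
  exact Dvd.dvd.mul_left h _

theorem sigma_X_eq_X [CharZero K] (σ : PowerSeries K ≃ₐ[K] PowerSeries K) {n : ℕ} (hn : n ≠ 0)
    (hσn : σ ^ n = 1) (h1 : coeff 1 (σ X) = 1) : σ X = X := by
  have hall : ∀ k, 2 ≤ k → (X : K⟦X⟧) ^ k ∣ σ X - X := by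
    intro k hk
    induction k with
    | zero => omega
    | succ k ih =>
      rcases Nat.lt_or_ge k 2 with hk2 | hk2
      · -- k + 1 = 2, base case
        have hkeq : k + 1 = 2 := by omega
        rw [hkeq, X_pow_dvd_iff]
        intro m hm
        interval_cases m
        · rw [map_sub, coeff_zero_eq_constantCoeff]
          simp [constantCoeff_sigma_X]
        · rw [map_sub, h1, coeff_one_X, sub_self]
      · exact step_dvd σ hn hσn hk2 (ih hk2)
  have : σ X - X = 0 := by
    ext m
    rw [map_zero]
    have := hall (m + 2) (by omega)
    exact X_pow_dvd_iff.mp this m (by omega)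
  linear_combination this

theorem sigma_coe_poly (σ : PowerSeries K ≃ₐ[K] PowerSeries K) (hX : σ X = X)
    (p : Polynomial K) : σ (p : K⟦X⟧) = (p : K⟦X⟧) := by
  induction p using Polynomial.induction_on with
  | C a => rw [Polynomial.coe_C, sigma_C]
  | add p q hp hq => rw [Polynomial.coe_add, map_add, hp, hq]
  | monomial m a _ =>
    rw [Polynomial.coe_mul, Polynomial.coe_pow, Polynomial.coe_X, map_mul, map_pow, hX,
      Polynomial.coe_C, sigma_C]

theorem eq_one_of_sigma_X [CharZero K] (σ : PowerSeries K ≃ₐ[K] PowerSeries K)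
    (hX : σ X = X) : σ = 1 := by
  have hf : ∀ f : K⟦X⟧, σ f = f := by
    intro f
    ext m
    set p := trunc (m + 1) f with hp
    have hdvd : (X : K⟦X⟧) ^ (m + 1) ∣ f - (p : K⟦X⟧) := by
      rw [X_pow_dvd_iff]
      intro j hj
      rw [map_sub, Polynomial.coeff_coe, hp, coeff_trunc, if_pos hj, sub_self]
    have h2 : (X : K⟦X⟧) ^ (m + 1) ∣ σ f - (p : K⟦X⟧) := by
      have := X_pow_dvd_map_sub σ hdvd
      rwa [sigma_coe_poly σ hX] at this
    have e1 : coeff m (σ f - (p : K⟦X⟧)) = 0 := X_pow_dvd_iff.mp h2 m (by omega)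
    have e2 : coeff m (f - (p : K⟦X⟧)) = 0 := X_pow_dvd_iff.mp hdvd m (by omega)
    rw [map_sub] at e1 e2
    rw [sub_eq_zero] at e1 e2
    rw [e1, e2]
  exact AlgEquiv.ext hf

end PowerSeriesAutCyclicAux

open PowerSeriesAutCyclicAux in
/-- If `K` is a field of characteristic `0`, then every finite subgroup of the group of
`K`-algebra automorphisms of `K⟦X⟧` is cyclic. -/
theorem powerSeries_aut_finite_subgroup_isCyclic (K : Type*) [Field K] [CharZero K]
    (G : Subgroup (PowerSeries K ≃ₐ[K] PowerSeries K)) [Finite G] :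
    IsCyclic G := by
  classical
  let f : G →* K :=
    { toFun := fun g => PowerSeries.coeff 1 ((g : PowerSeries K ≃ₐ[K] PowerSeries K)
        PowerSeries.X)
      map_one' := by
        show PowerSeries.coeff 1 ((1 : PowerSeries K ≃ₐ[K] PowerSeries K) PowerSeries.X) = 1
        simp [PowerSeries.coeff_one_X]
      map_mul' := fun a b => by
        show PowerSeries.coeff 1
            (((↑a * ↑b : PowerSeries K ≃ₐ[K] PowerSeries K)) PowerSeries.X) = _
        have hmul : ((↑a * ↑b : PowerSeries K ≃ₐ[K] PowerSeries K)) PowerSeries.X =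
            (↑a : PowerSeries K ≃ₐ[K] PowerSeries K)
              ((↑b : PowerSeries K ≃ₐ[K] PowerSeries K) PowerSeries.X) := rfl
        rw [hmul, coeff_one_map]
        ring }
  refine isCyclic_of_subgroup_isDomain f ?_
  -- f is injective
  have hker : ∀ c : G, f c = 1 → c = 1 := by
    intro c hc
    have hne : orderOf c ≠ 0 := (orderOf_pos c).ne'
    have hpow : (↑c : PowerSeries K ≃ₐ[K] PowerSeries K) ^ orderOf c = 1 := by
      have : c ^ orderOf c = 1 := pow_orderOf_eq_one c
      have := congrArg (Subgroup.subtype G) this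
      simpa only [map_pow, map_one, Subgroup.coe_subtype] using this
    have hX : (↑c : PowerSeries K ≃ₐ[K] PowerSeries K) PowerSeries.X = PowerSeries.X :=
      sigma_X_eq_X (σ := (c : PowerSeries K ≃ₐ[K] PowerSeries K)) hne hpow hc
    have : (↑c : PowerSeries K ≃ₐ[K] PowerSeries K) = 1 := eq_one_of_sigma_X _ hX
    exact Subtype.ext this
  intro a b hab
  have hb_ne : f b ≠ 0 := by
    intro h0
    have : f b * f b⁻¹ = 1 := by rw [← map_mul, mul_inv_cancel, map_one]
    rw [h0, zero_mul] at this
    exact zero_ne_one this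
  have hcb : f (a * b⁻¹) * f b = f b := by
    rw [← map_mul, inv_mul_cancel_right]
    exact hab
  have hc1 : f (a * b⁻¹) = 1 := by
    have h' : f (a * b⁻¹) * f b = 1 * f b := by rw [one_mul, hcb]
    exact mul_right_cancel₀ hb_ne h'
  have hc : a * b⁻¹ = 1 := hker _ hc1
  exact mul_inv_eq_one.mp hc
end

section
/- Let a, b be nonzero rational numbers and let B = ℍ[ℚ, a, b] be the corresponding quaternion algebra over ℚ. Assume B is a division ring and B is indefinite, i.e. ℍ[ℝ, a, b] is not a division ring. Then there exist three elements ω₁, ω₂, ω₃ ∈ B which are linearly independent over ℚ, such that star ωᵢ = −ωᵢ (they are pure quaternions) and ωᵢ * ωᵢ = dᵢ • 1 for some rational numbers dᵢ > 0 (i = 1, 2, 3). -/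
open Quaternion

lemma quat_neg_neg_isUnit (a b : ℝ) (ha : a < 0) (hb : b < 0)
    (x : ℍ[ℝ, a, b]) (hx : x ≠ 0) : IsUnit x := by
  set n : ℝ := x.re * x.re + (-a) * (x.imI * x.imI) + (-b) * (x.imJ * x.imJ)
      + (a * b) * (x.imK * x.imK) with hn
  have hcomp : x.re ≠ 0 ∨ x.imI ≠ 0 ∨ x.imJ ≠ 0 ∨ x.imK ≠ 0 := by
    by_contra h
    push_neg at h
    exact hx (by ext <;> simp [h.1, h.2.1, h.2.2.1, h.2.2.2])
  have h1 : (0:ℝ) ≤ x.re * x.re := mul_self_nonneg _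
  have h2 : (0:ℝ) ≤ (-a) * (x.imI * x.imI) :=
    mul_nonneg (by linarith) (mul_self_nonneg _)
  have h3 : (0:ℝ) ≤ (-b) * (x.imJ * x.imJ) :=
    mul_nonneg (by linarith) (mul_self_nonneg _)
  have h4 : (0:ℝ) ≤ (a * b) * (x.imK * x.imK) :=
    mul_nonneg (by nlinarith) (mul_self_nonneg _)
  have hnpos : 0 < n := by
    rcases hcomp with h | h | h | h
    · nlinarith [mul_self_pos.2 h]
    · nlinarith [mul_self_pos.2 h, mul_pos (neg_pos.2 ha) (mul_self_pos.2 h)]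
    · nlinarith [mul_pos (neg_pos.2 hb) (mul_self_pos.2 h)]
    · nlinarith [mul_pos (mul_pos_of_neg_of_neg ha hb) (mul_self_pos.2 h)]
  have hmul : x * star x = (n : ℍ[ℝ, a, b]) := by
    ext <;> simp <;> ring
  have hmul' : star x * x = (n : ℍ[ℝ, a, b]) := by
    ext <;> simp <;> ring
  refine isUnit_iff_exists.2 ⟨(n⁻¹ : ℝ) • star x, ?_, ?_⟩
  · rw [mul_smul_comm, hmul, QuaternionAlgebra.smul_coe,
      inv_mul_cancel₀ hnpos.ne', QuaternionAlgebra.coe_one]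
  · rw [smul_mul_assoc, hmul', QuaternionAlgebra.smul_coe,
      inv_mul_cancel₀ hnpos.ne', QuaternionAlgebra.coe_one]

lemma pure_star (a b x y z : ℚ) :
    star (⟨0, x, y, z⟩ : ℍ[ℚ, a, b]) = -(⟨0, x, y, z⟩ : ℍ[ℚ, a, b]) := by
  ext <;> simp

lemma pure_sq (a b x y z : ℚ) :
    (⟨0, x, y, z⟩ : ℍ[ℚ, a, b]) * ⟨0, x, y, z⟩
      = (a * x ^ 2 + b * y ^ 2 - a * b * z ^ 2) • (1 : ℍ[ℚ, a, b]) := by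
  ext <;> simp <;> ring

lemma li_mk (a b x1 y1 z1 x2 y2 z2 x3 y3 z3 : ℚ)
    (h : ∀ g0 g1 g2 : ℚ, g0 * x1 + g1 * x2 + g2 * x3 = 0 →
      g0 * y1 + g1 * y2 + g2 * y3 = 0 → g0 * z1 + g1 * z2 + g2 * z3 = 0 →
      g0 = 0 ∧ g1 = 0 ∧ g2 = 0) :
    LinearIndependent ℚ
      ![(⟨0, x1, y1, z1⟩ : ℍ[ℚ, a, b]), ⟨0, x2, y2, z2⟩, ⟨0, x3, y3, z3⟩] := by
  rw [Fintype.linearIndependent_iff]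
  intro g hg
  rw [Fin.sum_univ_three] at hg
  simp only [Matrix.cons_val_zero, Matrix.cons_val_one, Matrix.head_cons,
    Matrix.cons_val_two, Matrix.tail_cons] at hg
  rw [QuaternionAlgebra.ext_iff] at hg
  simp only [QuaternionAlgebra.re_add, QuaternionAlgebra.imI_add, QuaternionAlgebra.imJ_add,
    QuaternionAlgebra.imK_add, QuaternionAlgebra.re_smul, QuaternionAlgebra.imI_smul,
    QuaternionAlgebra.imJ_smul, QuaternionAlgebra.imK_smul, QuaternionAlgebra.re_zero,
    QuaternionAlgebra.imI_zero, QuaternionAlgebra.imJ_zero, QuaternionAlgebra.imK_zero,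
    smul_eq_mul] at hg
  obtain ⟨-, h1, h2, h3⟩ := hg
  have := h (g 0) (g 1) (g 2) (by linarith) (by linarith) (by linarith)
  intro i
  fin_cases i
  exacts [this.1, this.2.1, this.2.2]

/-- Let `B = ℍ[ℚ, a, b]` be a rational quaternion algebra (`a, b ≠ 0`) which is a
division ring and indefinite (i.e. `ℍ[ℝ, a, b]` is not a division ring).  Then there
exist three elements `ω₁, ω₂, ω₃ ∈ B`, linearly independent over `ℚ`, which are pure
quaternions (`star ωᵢ = -ωᵢ`) and satisfy `ωᵢ * ωᵢ = dᵢ • 1` for some rationals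
`dᵢ > 0`. -/
theorem quaternion_indefinite_exists_pure_positive (a b : ℚ) (ha : a ≠ 0) (hb : b ≠ 0)
    (hdiv : ∀ x : ℍ[ℚ, a, b], x ≠ 0 → IsUnit x)
    (hindef : ¬ ∀ x : ℍ[ℝ, (a : ℝ), (b : ℝ)], x ≠ 0 → IsUnit x) :
    ∃ ω : Fin 3 → ℍ[ℚ, a, b], LinearIndependent ℚ ω ∧
      ∀ i, star (ω i) = -(ω i) ∧ ∃ d : ℚ, 0 < d ∧ ω i * ω i = d • (1 : ℍ[ℚ, a, b]) := by
  have hab : 0 < a ∨ 0 < b := by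
    by_contra h
    push_neg at h
    refine hindef fun x hx => quat_neg_neg_isUnit _ _ ?_ ?_ x hx
    · exact_mod_cast lt_of_le_of_ne h.1 ha
    · exact_mod_cast lt_of_le_of_ne h.2 hb
  rcases hab with hapos | hbpos
  · rcases lt_or_ge 0 b with hbpos | hbneg
    · -- a > 0, b > 0
      obtain ⟨N, hN⟩ : ∃ N : ℚ, N = a * b / (a + b) + 1 := ⟨_, rfl⟩
      have habpos : 0 < a + b := by linarith
      have hNgt : a * b / (a + b) < N := by linarith
      have hr : 0 ≤ a * b / (a + b) := by positivity
      have hN1 : 1 ≤ N := by linarith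
      have hkey : a * b < N ^ 2 * (a + b) := by
        have : a * b / (a + b) < N ^ 2 := by nlinarith
        calc a * b = a * b / (a + b) * (a + b) := by field_simp
        _ < N ^ 2 * (a + b) := by nlinarith
      refine ⟨![⟨0,1,0,0⟩, ⟨0,0,1,0⟩, ⟨0,N,N,1⟩], ?_, ?_⟩
      · refine li_mk a b _ _ _ _ _ _ _ _ _ ?_
        intro g0 g1 g2 e1 e2 e3
        have hg2 : g2 = 0 := by linarith
        subst hg2
        refine ⟨by linarith, by linarith, rfl⟩
      · intro i
        fin_cases i <;>
          refine ⟨pure_star _ _ _ _ _, _, ?_, pure_sq _ _ _ _ _⟩ <;> nlinarith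
    · -- a > 0, b < 0
      have hbneg : b < 0 := lt_of_le_of_ne hbneg hb
      obtain ⟨N, hN⟩ : ∃ N : ℚ, N = -b / a + 1 := ⟨_, rfl⟩
      have hr : 0 ≤ -b / a := div_nonneg (by linarith) hapos.le
      have hN1 : 1 ≤ N := by linarith
      have hkey : -b < N ^ 2 * a := by
        have h' : -b / a < N ^ 2 := by nlinarith
        calc -b = -b / a * a := by field_simp
        _ < N ^ 2 * a := by nlinarith
      refine ⟨![⟨0,1,0,0⟩, ⟨0,0,0,1⟩, ⟨0,N,1,0⟩], ?_, ?_⟩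
      · refine li_mk a b _ _ _ _ _ _ _ _ _ ?_
        intro g0 g1 g2 e1 e2 e3
        have hg2 : g2 = 0 := by linarith
        subst hg2
        refine ⟨by linarith, by linarith, rfl⟩
      · intro i
        fin_cases i <;>
          refine ⟨pure_star _ _ _ _ _, _, ?_, pure_sq _ _ _ _ _⟩ <;> nlinarith
  · rcases lt_or_ge 0 a with hapos | haneg
    · -- a > 0, b > 0 (again)
      obtain ⟨N, hN⟩ : ∃ N : ℚ, N = a * b / (a + b) + 1 := ⟨_, rfl⟩
      have habpos : 0 < a + b := by linarith
      have hr : 0 ≤ a * b / (a + b) := by positivity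
      have hN1 : 1 ≤ N := by linarith
      have hkey : a * b < N ^ 2 * (a + b) := by
        have : a * b / (a + b) < N ^ 2 := by nlinarith
        calc a * b = a * b / (a + b) * (a + b) := by field_simp
        _ < N ^ 2 * (a + b) := by nlinarith
      refine ⟨![⟨0,1,0,0⟩, ⟨0,0,1,0⟩, ⟨0,N,N,1⟩], ?_, ?_⟩
      · refine li_mk a b _ _ _ _ _ _ _ _ _ ?_
        intro g0 g1 g2 e1 e2 e3
        have hg2 : g2 = 0 := by linarith
        subst hg2
        refine ⟨by linarith, by linarith, rfl⟩
      · intro i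
        fin_cases i <;>
          refine ⟨pure_star _ _ _ _ _, _, ?_, pure_sq _ _ _ _ _⟩ <;> nlinarith
    · -- a < 0, b > 0
      have haneg : a < 0 := lt_of_le_of_ne haneg ha
      obtain ⟨N, hN⟩ : ∃ N : ℚ, N = -a / b + 1 := ⟨_, rfl⟩
      have hr : 0 ≤ -a / b := div_nonneg (by linarith) hbpos.le
      have hN1 : 1 ≤ N := by linarith
      have hkey : -a < N ^ 2 * b := by
        have h' : -a / b < N ^ 2 := by nlinarith
        calc -a = -a / b * b := by field_simp
        _ < N ^ 2 * b := by nlinarith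
      refine ⟨![⟨0,0,1,0⟩, ⟨0,0,0,1⟩, ⟨0,1,N,0⟩], ?_, ?_⟩
      · refine li_mk a b _ _ _ _ _ _ _ _ _ ?_
        intro g0 g1 g2 e1 e2 e3
        have hg2 : g2 = 0 := by linarith
        subst hg2
        refine ⟨by linarith, by linarith, rfl⟩
      · intro i
        fin_cases i <;>
          refine ⟨pure_star _ _ _ _ _, _, ?_, pure_sq _ _ _ _ _⟩ <;> nlinarith
end

section
/- Let a, b be nonzero rational numbers and let B = ℍ[ℚ, a, b] be the corresponding quaternion algebra over ℚ; assume B is a division ring. Let O ⊆ B be a subring whose ℚ-linear span is all of B, and let ω ∈ B satisfy star ω = −ω and ω * ω = d • 1 for some rational number d > 0. Then there exists γ ∈ O with γ * star γ = 1 and γ ≠ 1, γ ≠ −1. -/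
open Quaternion

/-- Let `B = ℍ[ℚ, a, b]` (`a, b ≠ 0`) be a rational quaternion division algebra, let
`O ⊆ B` be a subring whose `ℚ`-linear span is all of `B`, and let `ω ∈ B` be a pure
quaternion (`star ω = -ω`) with `ω * ω = d • 1` for some rational `d > 0`.  Then there
exists a norm-one element `γ ∈ O` (i.e. `γ * star γ = 1`) with `γ ≠ 1` and `γ ≠ -1`. -/
theorem quaternion_order_exists_nontrivial_norm_one (a b : ℚ) (ha : a ≠ 0) (hb : b ≠ 0)
    (hdiv : ∀ x : ℍ[ℚ, a, b], x ≠ 0 → IsUnit x)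
    (O : Subring ℍ[ℚ, a, b])
    (hspan : Submodule.span ℚ (O : Set ℍ[ℚ, a, b]) = ⊤)
    (ω : ℍ[ℚ, a, b]) (hω : star ω = -ω)
    (d : ℚ) (hd : 0 < d) (hω2 : ω * ω = d • (1 : ℍ[ℚ, a, b])) :
    ∃ γ ∈ O, γ * star γ = 1 ∧ γ ≠ 1 ∧ γ ≠ -1 := by
  have hω0 : ω ≠ 0 := by
    intro h
    rw [h, zero_mul] at hω2
    have h1 : ((0 : ℍ[ℚ, a, b])).re = (d • (1 : ℍ[ℚ, a, b])).re := by rw [hω2]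
    simp at h1
    exact hd.ne' h1.symm
  have hnzd : ∀ x y : ℍ[ℚ, a, b], x * y = 0 → x = 0 ∨ y = 0 := by
    intro x y hxy
    by_cases hx : x = 0
    · exact Or.inl hx
    · exact Or.inr (((hdiv x hx).mul_right_eq_zero).mp hxy)
  -- find a nonzero integer multiple of ω in O
  have key : ∃ n : ℤ, n ≠ 0 ∧ (n : ℚ) • ω ∈ O := by
    let p : Submodule ℚ ℍ[ℚ, a, b] :=
      { carrier := {x | ∃ n : ℤ, n ≠ 0 ∧ (n : ℚ) • x ∈ O}
        add_mem' := by
          rintro x y ⟨n, hn, hx⟩ ⟨m, hm, hy⟩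
          refine ⟨n * m, mul_ne_zero hn hm, ?_⟩
          have : ((n * m : ℤ) : ℚ) • (x + y)
              = m • ((n : ℚ) • x) + n • ((m : ℚ) • y) := by
            rw [← Int.cast_smul_eq_zsmul ℚ m, ← Int.cast_smul_eq_zsmul ℚ n, smul_smul, smul_smul]
            push_cast
            module
          rw [this]
          exact add_mem (zsmul_mem hx m) (zsmul_mem hy n)
        zero_mem' := ⟨1, one_ne_zero, by simpa using O.zero_mem⟩
        smul_mem' := by
          rintro q x ⟨n, hn, hx⟩
          refine ⟨n * q.den, mul_ne_zero hn (by exact_mod_cast q.den_ne_zero), ?_⟩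
          have hq : ((n * q.den : ℤ) : ℚ) • (q • x) = q.num • ((n : ℚ) • x) := by
            rw [← Int.cast_smul_eq_zsmul ℚ, smul_smul, smul_smul]
            congr 1
            push_cast
            rw [mul_assoc, mul_comm (q.den : ℚ) q, Rat.mul_den_eq_num]
            ring
          rw [hq]
          exact zsmul_mem hx q.num }
    have hOle : (O : Set ℍ[ℚ, a, b]) ⊆ p := fun o ho => ⟨1, one_ne_zero, by simpa using ho⟩
    have : ω ∈ p := by
      have := Submodule.span_le.mpr hOle
      rw [hspan] at this
      exact this trivial
    exact this
  obtain ⟨n, hn, hnω⟩ := key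
  set N : ℤ := n * d.den with hN
  have hN0 : N ≠ 0 := mul_ne_zero hn (by exact_mod_cast d.den_ne_zero)
  set ω' : ℍ[ℚ, a, b] := ((N : ℤ) : ℚ) • ω with hω'def
  have hω'O : ω' ∈ O := by
    have : ω' = (d.den : ℤ) • ((n : ℚ) • ω) := by
      rw [hω'def, hN, ← Int.cast_smul_eq_zsmul ℚ, smul_smul]
      push_cast
      module
    rw [this]
    exact zsmul_mem hnω _
  have hω'0 : ω' ≠ 0 := smul_ne_zero (by exact_mod_cast hN0) hω0
  have hstarω' : star ω' = -ω' := by rw [hω'def, QuaternionAlgebra.star_smul, hω, smul_neg]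
  set D : ℤ := n ^ 2 * d.den * d.num with hD
  have hDval : ((D : ℤ) : ℚ) = (N : ℚ) ^ 2 * d := by
    rw [hD, hN]
    have hdd : (d.den : ℚ) * d = d.num := by
      rw [mul_comm, Rat.mul_den_eq_num]
    push_cast
    rw [mul_pow, ← hdd]
    ring
  have hω'2 : ω' * ω' = ((D : ℤ) : ℚ) • (1 : ℍ[ℚ, a, b]) := by
    rw [hω'def, smul_mul_smul_comm, hω2, smul_smul, hDval, sq]
  have hDpos : 0 < D := by
    have h1 : 0 < d.num := Rat.num_pos.mpr hd
    have h2 : 0 < (d.den : ℤ) := by exact_mod_cast d.pos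
    have h3 : 0 < n ^ 2 := by positivity
    positivity
  have hflip : -ω' = ω' → False := by
    intro h2
    have h3 : (2 : ℚ) • ω' = 0 := by
      rw [two_smul]
      nth_rewrite 1 [← h2]
      exact neg_add_cancel ω'
    exact hω'0 ((smul_eq_zero.mp h3).resolve_left two_ne_zero)
  have hDns : ¬ IsSquare D := by
    rintro ⟨m, hm⟩
    have hcomm : ((m : ℚ) • 1) * ω' = ω' * ((m : ℚ) • 1) := by
      simp [smul_mul_assoc, mul_smul_comm]
    have hc : (ω' - (m : ℚ) • 1) * (ω' + (m : ℚ) • 1) = 0 := by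
      rw [mul_add, sub_mul, sub_mul, hcomm, hω'2, hm]
      simp only [smul_mul_assoc, mul_smul_comm, smul_smul, one_mul, mul_one]
      push_cast
      module
    rcases hnzd _ _ hc with h | h
    · have h1 : ω' = (m : ℚ) • 1 := sub_eq_zero.mp h
      apply hflip
      rw [← hstarω', h1, QuaternionAlgebra.star_smul, star_one]
    · have h1 : ω' = -((m : ℚ) • 1) := eq_neg_of_add_eq_zero_left h
      apply hflip
      rw [← hstarω', h1, star_neg, QuaternionAlgebra.star_smul, star_one]
  obtain ⟨x, y, hxy, hy⟩ := Pell.exists_of_not_isSquare hDpos hDns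
  refine ⟨(x : ℚ) • 1 + (y : ℚ) • ω', ?_, ?_, ?_, ?_⟩
  · refine add_mem ?_ ?_
    · have h := zsmul_mem O.one_mem x
      rwa [← Int.cast_smul_eq_zsmul ℚ] at h
    · have h := zsmul_mem hω'O y
      rwa [← Int.cast_smul_eq_zsmul ℚ] at h
  · rw [star_add, QuaternionAlgebra.star_smul, QuaternionAlgebra.star_smul, star_one, hstarω']
    have expand : ((x : ℚ) • 1 + (y : ℚ) • ω') * ((x : ℚ) • 1 + (y : ℚ) • -ω')
        = ((x : ℚ) ^ 2) • (1 : ℍ[ℚ, a, b]) - ((y : ℚ) ^ 2) • (ω' * ω') := by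
      simp only [smul_neg, mul_add, add_mul, mul_neg, smul_mul_assoc, mul_smul_comm,
        smul_smul, one_mul, mul_one]
      module
    rw [expand, hω'2, smul_smul]
    have : (x : ℚ) ^ 2 - (y : ℚ) ^ 2 * ((D : ℤ) : ℚ) = 1 := by
      have h2 : ((x : ℚ)) ^ 2 - ((D : ℤ) : ℚ) * (y : ℚ) ^ 2 = 1 := by exact_mod_cast hxy
      linear_combination h2
    rw [← sub_smul, this, one_smul]
  · intro h
    have h1 : (y : ℚ) • ω' = ((1 - (x : ℚ))) • 1 := by
      linear_combination (norm := module) h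
    have h2 : star ((y : ℚ) • ω') = (y : ℚ) • ω' := by
      rw [h1, QuaternionAlgebra.star_smul, star_one]
    rw [QuaternionAlgebra.star_smul, hstarω'] at h2
    have hyq : (y : ℚ) ≠ 0 := by exact_mod_cast hy
    exact hflip (smul_right_injective ℍ[ℚ, a, b] hyq h2)
  · intro h
    have h1 : (y : ℚ) • ω' = ((-1 - (x : ℚ))) • 1 := by
      linear_combination (norm := module) h
    have h2 : star ((y : ℚ) • ω') = (y : ℚ) • ω' := by
      rw [h1, QuaternionAlgebra.star_smul, star_one]
    rw [QuaternionAlgebra.star_smul, hstarω'] at h2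
    have hyq : (y : ℚ) ≠ 0 := by exact_mod_cast hy
    exact hflip (smul_right_injective ℍ[ℚ, a, b] hyq h2)
end

section
/- Let a, b be nonzero rational numbers and let B = ℍ[ℚ, a, b] be the corresponding quaternion algebra over ℚ. Assume B is a division ring and B is indefinite, i.e. ℍ[ℝ, a, b] is not a division ring. Let O ⊆ B be an order, i.e. a subring of B that is finitely generated as a ℤ-module and whose ℚ-linear span is all of B. Then the ℚ-linear span of the set Γ = {γ ∈ O : γ * star γ = 1} of norm-one elements of O is all of B. -/
open Quaternion

section Aux

variable {a b : ℚ}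

private theorem qa_mulne (hdiv : ∀ x : ℍ[ℚ, a, b], x ≠ 0 → IsUnit x)
    {u v : ℍ[ℚ, a, b]} (hu : u ≠ 0) (hv : v ≠ 0) : u * v ≠ 0 := fun h =>
  hv (((hdiv u hu).mul_right_eq_zero).mp h)

private theorem qa_exists_int_smul_mem (O : Subring ℍ[ℚ, a, b])
    (hspan : Submodule.span ℚ (O : Set ℍ[ℚ, a, b]) = ⊤) (x : ℍ[ℚ, a, b]) :
    ∃ m : ℤ, 0 < m ∧ (m : ℚ) • x ∈ O := by
  have hx : x ∈ Submodule.span ℚ (O : Set ℍ[ℚ, a, b]) := by rw [hspan]; trivial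
  rw [Submodule.mem_span_set'] at hx
  obtain ⟨n, f, g, hsum⟩ := hx
  refine ⟨∏ i, ((f i).den : ℤ), ?_, ?_⟩
  · exact Finset.prod_pos fun i _ => Int.natCast_pos.mpr (f i).pos
  · rw [← hsum, Finset.smul_sum]
    refine sum_mem fun i _ => ?_
    rw [smul_smul]
    obtain ⟨c, hc⟩ : ((f i).den : ℤ) ∣ ∏ j, ((f j).den : ℤ) :=
      Finset.dvd_prod_of_mem _ (Finset.mem_univ i)
    have key : ((∏ j, ((f j).den : ℤ) : ℤ) : ℚ) * f i = ((c * (f i).num : ℤ) : ℚ) := by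
      rw [hc]; push_cast
      linear_combination (c : ℚ) * (Rat.mul_den_eq_num (f i))
    rw [key, Int.cast_smul_eq_zsmul]
    exact zsmul_mem (g i).2 _

private theorem qa_pure_mem_span (hdiv : ∀ x : ℍ[ℚ, a, b], x ≠ 0 → IsUnit x)
    (O : Subring ℍ[ℚ, a, b]) {p : ℍ[ℚ, a, b]} (hpO : p ∈ O)
    (hre : p.re = 0) (hp0 : p ≠ 0) {c : ℚ} (hsq : p * p = (c : ℍ[ℚ, a, b])) (hc : 0 < c) :
    p ∈ Submodule.span ℚ {γ : ℍ[ℚ, a, b] | γ ∈ O ∧ γ * star γ = 1} := by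
  have hden : ((c.den : ℚ)) ≠ 0 := by exact_mod_cast c.den_ne_zero
  set d : ℤ := c.num * c.den with hd
  set q : ℍ[ℚ, a, b] := (c.den : ℚ) • p with hq
  have hqO : q ∈ O := by
    have : ((c.den : ℕ) : ℚ) = (((c.den : ℤ)) : ℚ) := by push_cast; ring
    rw [hq, this, Int.cast_smul_eq_zsmul]
    exact zsmul_mem hpO _
  have hqre : q.re = 0 := by simp [hq, hre]
  have hq0 : q ≠ 0 := smul_ne_zero hden hp0
  have hdc : (c.den : ℚ) * (c.den : ℚ) * c = ((d : ℤ) : ℚ) := by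
    push_cast [hd]
    linear_combination ((c.den : ℚ)) * (Rat.mul_den_eq_num c)
  have hqq : q * q = ((d : ℚ) : ℍ[ℚ, a, b]) := by
    rw [hq, smul_mul_smul_comm, hsq, ← QuaternionAlgebra.coe_mul_eq_smul,
      QuaternionAlgebra.coe_mul]
    exact_mod_cast congrArg (fun x : ℚ => (x : ℍ[ℚ, a, b])) hdc
  have hd0 : 0 < d := mul_pos (Rat.num_pos.mpr hc) (Int.natCast_pos.mpr c.pos)
  have hdns : ¬ IsSquare d := by
    rintro ⟨r, hr⟩
    have hcomm : Commute q (((r : ℚ) : ℍ[ℚ, a, b])) :=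
      (QuaternionAlgebra.coe_commute (r : ℚ) q).symm
    have h1 : (q + ((r : ℚ) : ℍ[ℚ, a, b])) * (q - ((r : ℚ) : ℍ[ℚ, a, b])) = 0 := by
      rw [← hcomm.mul_self_sub_mul_self_eq, hqq, ← QuaternionAlgebra.coe_mul,
        ← QuaternionAlgebra.coe_sub]
      have : (d : ℚ) - (r : ℚ) * (r : ℚ) = 0 := by rw [hr]; push_cast; ring
      rw [this, QuaternionAlgebra.coe_zero]
    have hqplus : q + ((r : ℚ) : ℍ[ℚ, a, b]) ≠ 0 := by
      intro h
      have h2 : q = -((r : ℚ) : ℍ[ℚ, a, b]) := eq_neg_of_add_eq_zero_left h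
      apply hq0
      apply QuaternionAlgebra.ext
      · simpa using hqre
      · simpa using congrArg QuaternionAlgebra.imI h2
      · simpa using congrArg QuaternionAlgebra.imJ h2
      · simpa using congrArg QuaternionAlgebra.imK h2
    have hqminus : q - ((r : ℚ) : ℍ[ℚ, a, b]) ≠ 0 := by
      intro h
      have h2 : q = ((r : ℚ) : ℍ[ℚ, a, b]) := sub_eq_zero.mp h
      apply hq0
      apply QuaternionAlgebra.ext
      · simpa using hqre
      · simpa using congrArg QuaternionAlgebra.imI h2
      · simpa using congrArg QuaternionAlgebra.imJ h2
      · simpa using congrArg QuaternionAlgebra.imK h2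
    exact qa_mulne hdiv hqplus hqminus h1
  obtain ⟨s, t, hst, ht0⟩ := Pell.exists_of_not_isSquare hd0 hdns
  have hst' : (s : ℚ) ^ 2 - (d : ℚ) * (t : ℚ) ^ 2 = 1 := by exact_mod_cast hst
  have ht0' : ((t : ℚ)) ≠ 0 := by exact_mod_cast ht0
  set γ : ℍ[ℚ, a, b] := ((s : ℚ) : ℍ[ℚ, a, b]) + ((t : ℚ) : ℍ[ℚ, a, b]) * q with hγ
  have hγO : γ ∈ O := by
    apply add_mem
    · rw [QuaternionAlgebra.coe_intCast]; exact intCast_mem O s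
    · rw [QuaternionAlgebra.coe_mul_eq_smul, Int.cast_smul_eq_zsmul]
      exact zsmul_mem hqO t
  have key : a * q.imI * q.imI + b * q.imJ * q.imJ - a * b * q.imK * q.imK = (d : ℚ) := by
    have := congrArg QuaternionAlgebra.re hqq
    simpa [hqre] using this
  have hγ1 : γ * star γ = 1 := by
    have hsγ : star γ = ((s : ℚ) : ℍ[ℚ, a, b]) - ((t : ℚ) : ℍ[ℚ, a, b]) * q := by
      ext <;> simp [hγ, hqre] <;> ring
    rw [hsγ, hγ]
    ext
    case re => simp [hqre]; linear_combination hst' - (t : ℚ) ^ 2 * key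
    case imI => simp [hqre]; ring
    case imJ => simp [hqre]; ring
    case imK => simp [hqre]; ring
  have hγmem : γ ∈ Submodule.span ℚ {γ : ℍ[ℚ, a, b] | γ ∈ O ∧ γ * star γ = 1} :=
    Submodule.subset_span ⟨hγO, hγ1⟩
  have h1mem : (1 : ℍ[ℚ, a, b]) ∈ Submodule.span ℚ {γ : ℍ[ℚ, a, b] | γ ∈ O ∧ γ * star γ = 1} :=
    Submodule.subset_span ⟨one_mem O, by simp⟩
  have hrep : p = ((t : ℚ) * (c.den : ℚ))⁻¹ • (γ - (s : ℚ) • 1) := by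
    rw [hγ, hq]
    ext <;> simp <;> field_simp <;> ring
  rw [hrep]
  exact Submodule.smul_mem _ _ (sub_mem hγmem (Submodule.smul_mem _ _ h1mem))

end Aux

set_option maxHeartbeats 2000000 in
/-- Let `B = ℍ[ℚ, a, b]` (`a, b ≠ 0`) be an indefinite rational quaternion division
algebra and let `O ⊆ B` be an order (a subring, finitely generated as a `ℤ`-module,
whose `ℚ`-linear span is all of `B`).  Then the `ℚ`-linear span of the set
`Γ = {γ ∈ O : γ * star γ = 1}` of norm-one elements of `O` is all of `B`. -/
theorem quaternion_norm_one_units_span (a b : ℚ) (ha : a ≠ 0) (hb : b ≠ 0)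
    (hdiv : ∀ x : ℍ[ℚ, a, b], x ≠ 0 → IsUnit x)
    (hindef : ¬ ∀ x : ℍ[ℝ, (a : ℝ), (b : ℝ)], x ≠ 0 → IsUnit x)
    (O : Subring ℍ[ℚ, a, b])
    (hfg : O.toAddSubgroup.FG)
    (hspan : Submodule.span ℚ (O : Set ℍ[ℚ, a, b]) = ⊤) :
    Submodule.span ℚ {γ : ℍ[ℚ, a, b] | γ ∈ O ∧ γ * star γ = 1} = ⊤ := by
  set V := Submodule.span ℚ {γ : ℍ[ℚ, a, b] | γ ∈ O ∧ γ * star γ = 1} with hV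
  -- nondegeneracy facts from the division ring hypothesis
  have hane1 : a ≠ 1 := by
    intro h
    have h0 : ((⟨1,1,0,0⟩ : ℍ[ℚ,a,b]) * ⟨1,-1,0,0⟩) = (((1-a : ℚ)) : ℍ[ℚ,a,b]) := by
      ext <;> simp <;> ring
    have h1 : (⟨1,1,0,0⟩ : ℍ[ℚ,a,b]) ≠ 0 := by
      intro hx
      have h2 : (1:ℚ) = 0 := congrArg QuaternionAlgebra.imI hx
      norm_num at h2
    have h2 : (⟨1,-1,0,0⟩ : ℍ[ℚ,a,b]) ≠ 0 := by
      intro hx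
      have h2 : (-1:ℚ) = 0 := congrArg QuaternionAlgebra.imI hx
      norm_num at h2
    apply qa_mulne hdiv h1 h2
    rw [h0, h]; norm_num
  have hbne1 : b ≠ 1 := by
    intro h
    have h0 : ((⟨1,0,1,0⟩ : ℍ[ℚ,a,b]) * ⟨1,0,-1,0⟩) = (((1-b : ℚ)) : ℍ[ℚ,a,b]) := by
      ext <;> simp <;> ring
    have h1 : (⟨1,0,1,0⟩ : ℍ[ℚ,a,b]) ≠ 0 := by
      intro hx
      have h2 : (1:ℚ) = 0 := congrArg QuaternionAlgebra.imJ hx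
      norm_num at h2
    have h2 : (⟨1,0,-1,0⟩ : ℍ[ℚ,a,b]) ≠ 0 := by
      intro hx
      have h2 : (-1:ℚ) = 0 := congrArg QuaternionAlgebra.imJ hx
      norm_num at h2
    apply qa_mulne hdiv h1 h2
    rw [h0, h]; norm_num
  have habne : (1:ℚ) + a * b ≠ 0 := by
    intro h
    have h0 : ((⟨1,0,0,1⟩ : ℍ[ℚ,a,b]) * ⟨1,0,0,-1⟩) = (((1+a*b : ℚ)) : ℍ[ℚ,a,b]) := by
      ext <;> simp <;> ring
    have h1 : (⟨1,0,0,1⟩ : ℍ[ℚ,a,b]) ≠ 0 := by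
      intro hx
      have h2 : (1:ℚ) = 0 := congrArg QuaternionAlgebra.imK hx
      norm_num at h2
    have h2 : (⟨1,0,0,-1⟩ : ℍ[ℚ,a,b]) ≠ 0 := by
      intro hx
      have h2 : (-1:ℚ) = 0 := congrArg QuaternionAlgebra.imK hx
      norm_num at h2
    apply qa_mulne hdiv h1 h2
    rw [h0, h, QuaternionAlgebra.coe_zero]
  -- indefiniteness forces a > 0 or b > 0
  have hpos : 0 < a ∨ 0 < b := by
    by_contra hcon
    push_neg at hcon
    have ha' : (a:ℝ) < 0 := by exact_mod_cast lt_of_le_of_ne hcon.1 ha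
    have hb' : (b:ℝ) < 0 := by exact_mod_cast lt_of_le_of_ne hcon.2 hb
    apply hindef
    intro x hx
    set N : ℝ := x.re*x.re + (-(a:ℝ))*(x.imI*x.imI) + (-(b:ℝ))*(x.imJ*x.imJ)
        + ((a:ℝ)*(b:ℝ))*(x.imK*x.imK) with hN
    have hA : (0:ℝ) < -(a:ℝ) := by linarith
    have hB : (0:ℝ) < -(b:ℝ) := by linarith
    have hAB : (0:ℝ) < (a:ℝ)*(b:ℝ) := mul_pos_of_neg_of_neg ha' hb'
    have hcomp : ¬ (x.re = 0 ∧ x.imI = 0 ∧ x.imJ = 0 ∧ x.imK = 0) := by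
      rintro ⟨h1,h2,h3,h4⟩
      apply hx
      ext <;> simp [h1,h2,h3,h4]
    have hN0 : 0 < N := by
      have t1 := mul_self_nonneg x.re
      have t2 := mul_nonneg hA.le (mul_self_nonneg x.imI)
      have t3 := mul_nonneg hB.le (mul_self_nonneg x.imJ)
      have t4 := mul_nonneg hAB.le (mul_self_nonneg x.imK)
      rcases not_and_or.mp hcomp with h | hrest
      · nlinarith [mul_self_pos.mpr h]
      rcases not_and_or.mp hrest with h | hrest
      · nlinarith [mul_pos hA (mul_self_pos.mpr h)]
      rcases not_and_or.mp hrest with h | h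
      · nlinarith [mul_pos hB (mul_self_pos.mpr h)]
      · nlinarith [mul_pos hAB (mul_self_pos.mpr h)]
    have hxs : x * star x = ((N : ℝ) : ℍ[ℝ,(a:ℝ),(b:ℝ)]) := by
      ext
      case re => simp; rw [hN]; ring
      case imI => simp; ring
      case imJ => simp; ring
      case imK => simp; ring
    have hsx : star x * x = ((N : ℝ) : ℍ[ℝ,(a:ℝ),(b:ℝ)]) := by
      ext
      case re => simp; rw [hN]; ring
      case imI => simp; ring
      case imJ => simp; ring
      case imK => simp; ring
    refine ⟨⟨x, N⁻¹ • star x, ?_, ?_⟩, rfl⟩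
    · rw [mul_smul_comm, hxs, ← QuaternionAlgebra.coe_mul_eq_smul, ← QuaternionAlgebra.coe_mul,
        inv_mul_cancel₀ hN0.ne', QuaternionAlgebra.coe_one]
    · rw [smul_mul_assoc, hsx, ← QuaternionAlgebra.coe_mul_eq_smul, ← QuaternionAlgebra.coe_mul,
        inv_mul_cancel₀ hN0.ne', QuaternionAlgebra.coe_one]
  have h1V : (1 : ℍ[ℚ,a,b]) ∈ V := Submodule.subset_span ⟨one_mem O, by simp⟩
  have h1b : (1:ℚ) - b ≠ 0 := sub_ne_zero.mpr (Ne.symm hbne1)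
  have h1a : (1:ℚ) - a ≠ 0 := sub_ne_zero.mpr (Ne.symm hane1)
  have hijk : (⟨0,1,0,0⟩ : ℍ[ℚ,a,b]) ∈ V ∧ (⟨0,0,1,0⟩ : ℍ[ℚ,a,b]) ∈ V ∧
      (⟨0,0,0,1⟩ : ℍ[ℚ,a,b]) ∈ V := by
    rcases hpos with hA | hB
    · -- case 0 < a
      obtain ⟨m₀, hm₀, hwO⟩ := qa_exists_int_smul_mem O hspan ⟨0,1,0,0⟩
      have hm₀q : (0:ℚ) < (m₀:ℚ) := by exact_mod_cast hm₀
      set w : ℍ[ℚ,a,b] := (m₀:ℚ) • ⟨0,1,0,0⟩ with hw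
      have hwre : w.re = 0 := by simp [hw]
      have hw0 : w ≠ 0 := by
        intro h
        have h2 := congrArg QuaternionAlgebra.imI (hw.symm.trans h)
        simp at h2
        exact hm₀q.ne' (by exact_mod_cast h2)
      have hwsq : w * w = ((((m₀:ℚ)*(m₀:ℚ) * a : ℚ)) : ℍ[ℚ,a,b]) := by
        rw [hw]; ext <;> simp <;> ring
      have hwV : w ∈ V := qa_pure_mem_span hdiv O hwO hwre hw0 hwsq (by positivity)
      have hiV : (⟨0,1,0,0⟩:ℍ[ℚ,a,b]) ∈ V := by
        have h2 := V.smul_mem ((m₀:ℚ))⁻¹ hwV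
        rwa [hw, smul_smul, inv_mul_cancel₀ hm₀q.ne', one_smul] at h2
      -- k, via conjugation by 1 + j
      obtain ⟨m₁, hm₁, hu₁O⟩ := qa_exists_int_smul_mem O hspan ⟨1,0,1,0⟩
      have hm₁q : (0:ℚ) < (m₁:ℚ) := by exact_mod_cast hm₁
      set u₁ : ℍ[ℚ,a,b] := (m₁:ℚ) • ⟨1,0,1,0⟩ with hu₁
      have hsu₁O : star u₁ ∈ O := by
        have h2 : star u₁ = ((2*(m₁:ℚ)) • (1:ℍ[ℚ,a,b])) - u₁ := by
          rw [hu₁]; ext <;> simp <;> ring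
        have h4 : ((2*(m₁:ℚ)) • (1:ℍ[ℚ,a,b])) ∈ O := by
          have h5 : ((2*(m₁:ℚ))) = (((2*m₁ : ℤ)):ℚ) := by push_cast; ring
          rw [h5, Int.cast_smul_eq_zsmul]
          exact zsmul_mem (one_mem O) _
        rw [h2]; exact sub_mem h4 hu₁O
      set p₁ := u₁ * w * star u₁ with hp₁
      have hp₁O : p₁ ∈ O := mul_mem (mul_mem hu₁O hwO) hsu₁O
      have hp₁eq : p₁ = ⟨0, (m₁:ℚ)*(m₁:ℚ)*(m₀:ℚ)*(1+b), 0, -(2*(m₁:ℚ)*(m₁:ℚ)*(m₀:ℚ))⟩ := by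
        rw [hp₁, hu₁, hw]; ext <;> simp <;> ring
      have hp₁V : p₁ ∈ V := by
        refine qa_pure_mem_span hdiv O hp₁O (by rw [hp₁eq]) ?_
          (c := ((m₁:ℚ)*(m₁:ℚ)*(m₀:ℚ))*((m₁:ℚ)*(m₁:ℚ)*(m₀:ℚ)) * a * ((1-b)*(1-b))) ?_ ?_
        · intro h
          have h3 : -(2*(m₁:ℚ)*(m₁:ℚ)*(m₀:ℚ)) = (0:ℚ) :=
            congrArg QuaternionAlgebra.imK (hp₁eq.symm.trans h)
          nlinarith [mul_pos (mul_pos hm₁q hm₁q) hm₀q]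
        · rw [hp₁eq]; ext <;> simp <;> ring
        · exact mul_pos (by positivity) (mul_self_pos.mpr h1b)
      have hkV : (⟨0,0,0,1⟩:ℍ[ℚ,a,b]) ∈ V := by
        have hcomb : (⟨0,0,0,1⟩:ℍ[ℚ,a,b]) =
            ((1+b)/2) • ⟨0,1,0,0⟩ - (2*(m₁:ℚ)*(m₁:ℚ)*(m₀:ℚ))⁻¹ • p₁ := by
          rw [hp₁eq]; ext <;> simp <;> field_simp <;> ring
        rw [hcomb]; exact sub_mem (V.smul_mem _ hiV) (V.smul_mem _ hp₁V)
      -- j, via conjugation by 1 + k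
      obtain ⟨m₂, hm₂, hu₂O⟩ := qa_exists_int_smul_mem O hspan ⟨1,0,0,1⟩
      have hm₂q : (0:ℚ) < (m₂:ℚ) := by exact_mod_cast hm₂
      set u₂ : ℍ[ℚ,a,b] := (m₂:ℚ) • ⟨1,0,0,1⟩ with hu₂
      have hsu₂O : star u₂ ∈ O := by
        have h2 : star u₂ = ((2*(m₂:ℚ)) • (1:ℍ[ℚ,a,b])) - u₂ := by
          rw [hu₂]; ext <;> simp <;> ring
        have h4 : ((2*(m₂:ℚ)) • (1:ℍ[ℚ,a,b])) ∈ O := by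
          have h5 : ((2*(m₂:ℚ))) = (((2*m₂ : ℤ)):ℚ) := by push_cast; ring
          rw [h5, Int.cast_smul_eq_zsmul]
          exact zsmul_mem (one_mem O) _
        rw [h2]; exact sub_mem h4 hu₂O
      set p₂ := u₂ * w * star u₂ with hp₂
      have hp₂O : p₂ ∈ O := mul_mem (mul_mem hu₂O hwO) hsu₂O
      have hp₂eq : p₂ = ⟨0, (m₂:ℚ)*(m₂:ℚ)*(m₀:ℚ)*(1-a*b), -(2*a*(m₂:ℚ)*(m₂:ℚ)*(m₀:ℚ)), 0⟩ := by
        rw [hp₂, hu₂, hw]; ext <;> simp <;> ring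
      have hp₂V : p₂ ∈ V := by
        refine qa_pure_mem_span hdiv O hp₂O (by rw [hp₂eq]) ?_
          (c := ((m₂:ℚ)*(m₂:ℚ)*(m₀:ℚ))*((m₂:ℚ)*(m₂:ℚ)*(m₀:ℚ)) * a * ((1+a*b)*(1+a*b))) ?_ ?_
        · intro h
          have h3 : -(2*a*(m₂:ℚ)*(m₂:ℚ)*(m₀:ℚ)) = (0:ℚ) :=
            congrArg QuaternionAlgebra.imJ (hp₂eq.symm.trans h)
          have h4 : (m₂:ℚ)*(m₂:ℚ)*(m₀:ℚ) ≠ 0 := by positivity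
          apply ha
          have h5 : a * (2*(m₂:ℚ)*(m₂:ℚ)*(m₀:ℚ)) = 0 := by linarith
          rcases mul_eq_zero.mp h5 with h6 | h6
          · exact h6
          · exfalso; apply h4; linarith
        · rw [hp₂eq]; ext <;> simp <;> ring
        · exact mul_pos (by positivity) (mul_self_pos.mpr habne)
      have hjV : (⟨0,0,1,0⟩:ℍ[ℚ,a,b]) ∈ V := by
        have hcomb : (⟨0,0,1,0⟩:ℍ[ℚ,a,b]) =
            ((1-a*b)/(2*a)) • ⟨0,1,0,0⟩ - (2*a*(m₂:ℚ)*(m₂:ℚ)*(m₀:ℚ))⁻¹ • p₂ := by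
          rw [hp₂eq]; ext <;> simp <;> field_simp <;> ring
        rw [hcomb]; exact sub_mem (V.smul_mem _ hiV) (V.smul_mem _ hp₂V)
      exact ⟨hiV, hjV, hkV⟩
    · -- case 0 < b
      obtain ⟨m₀, hm₀, hwO⟩ := qa_exists_int_smul_mem O hspan ⟨0,0,1,0⟩
      have hm₀q : (0:ℚ) < (m₀:ℚ) := by exact_mod_cast hm₀
      set w : ℍ[ℚ,a,b] := (m₀:ℚ) • ⟨0,0,1,0⟩ with hw
      have hwre : w.re = 0 := by simp [hw]
      have hw0 : w ≠ 0 := by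
        intro h
        have h2 := congrArg QuaternionAlgebra.imJ (hw.symm.trans h)
        simp at h2
        exact hm₀q.ne' (by exact_mod_cast h2)
      have hwsq : w * w = ((((m₀:ℚ)*(m₀:ℚ) * b : ℚ)) : ℍ[ℚ,a,b]) := by
        rw [hw]; ext <;> simp <;> ring
      have hwV : w ∈ V := qa_pure_mem_span hdiv O hwO hwre hw0 hwsq (by positivity)
      have hjV : (⟨0,0,1,0⟩:ℍ[ℚ,a,b]) ∈ V := by
        have h2 := V.smul_mem ((m₀:ℚ))⁻¹ hwV
        rwa [hw, smul_smul, inv_mul_cancel₀ hm₀q.ne', one_smul] at h2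
      -- k, via conjugation by 1 + i
      obtain ⟨m₁, hm₁, hu₁O⟩ := qa_exists_int_smul_mem O hspan ⟨1,1,0,0⟩
      have hm₁q : (0:ℚ) < (m₁:ℚ) := by exact_mod_cast hm₁
      set u₁ : ℍ[ℚ,a,b] := (m₁:ℚ) • ⟨1,1,0,0⟩ with hu₁
      have hsu₁O : star u₁ ∈ O := by
        have h2 : star u₁ = ((2*(m₁:ℚ)) • (1:ℍ[ℚ,a,b])) - u₁ := by
          rw [hu₁]; ext <;> simp <;> ring
        have h4 : ((2*(m₁:ℚ)) • (1:ℍ[ℚ,a,b])) ∈ O := by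
          have h5 : ((2*(m₁:ℚ))) = (((2*m₁ : ℤ)):ℚ) := by push_cast; ring
          rw [h5, Int.cast_smul_eq_zsmul]
          exact zsmul_mem (one_mem O) _
        rw [h2]; exact sub_mem h4 hu₁O
      set p₁ := u₁ * w * star u₁ with hp₁
      have hp₁O : p₁ ∈ O := mul_mem (mul_mem hu₁O hwO) hsu₁O
      have hp₁eq : p₁ = ⟨0, 0, (m₁:ℚ)*(m₁:ℚ)*(m₀:ℚ)*(1+a), 2*(m₁:ℚ)*(m₁:ℚ)*(m₀:ℚ)⟩ := by
        rw [hp₁, hu₁, hw]; ext <;> simp <;> ring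
      have hp₁V : p₁ ∈ V := by
        refine qa_pure_mem_span hdiv O hp₁O (by rw [hp₁eq]) ?_
          (c := ((m₁:ℚ)*(m₁:ℚ)*(m₀:ℚ))*((m₁:ℚ)*(m₁:ℚ)*(m₀:ℚ)) * b * ((1-a)*(1-a))) ?_ ?_
        · intro h
          have h3 : 2*(m₁:ℚ)*(m₁:ℚ)*(m₀:ℚ) = (0:ℚ) :=
            congrArg QuaternionAlgebra.imK (hp₁eq.symm.trans h)
          nlinarith [mul_pos (mul_pos hm₁q hm₁q) hm₀q]
        · rw [hp₁eq]; ext <;> simp <;> ring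
        · exact mul_pos (by positivity) (mul_self_pos.mpr h1a)
      have hkV : (⟨0,0,0,1⟩:ℍ[ℚ,a,b]) ∈ V := by
        have hcomb : (⟨0,0,0,1⟩:ℍ[ℚ,a,b]) =
            (2*(m₁:ℚ)*(m₁:ℚ)*(m₀:ℚ))⁻¹ • p₁ - ((1+a)/2) • ⟨0,0,1,0⟩ := by
          rw [hp₁eq]; ext <;> simp <;> field_simp <;> ring
        rw [hcomb]; exact sub_mem (V.smul_mem _ hp₁V) (V.smul_mem _ hjV)
      -- i, via conjugation by 1 + k
      obtain ⟨m₂, hm₂, hu₂O⟩ := qa_exists_int_smul_mem O hspan ⟨1,0,0,1⟩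
      have hm₂q : (0:ℚ) < (m₂:ℚ) := by exact_mod_cast hm₂
      set u₂ : ℍ[ℚ,a,b] := (m₂:ℚ) • ⟨1,0,0,1⟩ with hu₂
      have hsu₂O : star u₂ ∈ O := by
        have h2 : star u₂ = ((2*(m₂:ℚ)) • (1:ℍ[ℚ,a,b])) - u₂ := by
          rw [hu₂]; ext <;> simp <;> ring
        have h4 : ((2*(m₂:ℚ)) • (1:ℍ[ℚ,a,b])) ∈ O := by
          have h5 : ((2*(m₂:ℚ))) = (((2*m₂ : ℤ)):ℚ) := by push_cast; ring
          rw [h5, Int.cast_smul_eq_zsmul]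
          exact zsmul_mem (one_mem O) _
        rw [h2]; exact sub_mem h4 hu₂O
      set p₂ := u₂ * w * star u₂ with hp₂
      have hp₂O : p₂ ∈ O := mul_mem (mul_mem hu₂O hwO) hsu₂O
      have hp₂eq : p₂ = ⟨0, 2*b*(m₂:ℚ)*(m₂:ℚ)*(m₀:ℚ), (m₂:ℚ)*(m₂:ℚ)*(m₀:ℚ)*(1-a*b), 0⟩ := by
        rw [hp₂, hu₂, hw]; ext <;> simp <;> ring
      have hp₂V : p₂ ∈ V := by
        refine qa_pure_mem_span hdiv O hp₂O (by rw [hp₂eq]) ?_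
          (c := ((m₂:ℚ)*(m₂:ℚ)*(m₀:ℚ))*((m₂:ℚ)*(m₂:ℚ)*(m₀:ℚ)) * b * ((1+a*b)*(1+a*b))) ?_ ?_
        · intro h
          have h3 : 2*b*(m₂:ℚ)*(m₂:ℚ)*(m₀:ℚ) = (0:ℚ) :=
            congrArg QuaternionAlgebra.imI (hp₂eq.symm.trans h)
          have h4 : (m₂:ℚ)*(m₂:ℚ)*(m₀:ℚ) ≠ 0 := by positivity
          apply hb
          have h5 : b * (2*(m₂:ℚ)*(m₂:ℚ)*(m₀:ℚ)) = 0 := by linarith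
          rcases mul_eq_zero.mp h5 with h6 | h6
          · exact h6
          · exfalso; apply h4; linarith
        · rw [hp₂eq]; ext <;> simp <;> ring
        · exact mul_pos (by positivity) (mul_self_pos.mpr habne)
      have hiV : (⟨0,1,0,0⟩:ℍ[ℚ,a,b]) ∈ V := by
        have hcomb : (⟨0,1,0,0⟩:ℍ[ℚ,a,b]) =
            (2*b*(m₂:ℚ)*(m₂:ℚ)*(m₀:ℚ))⁻¹ • p₂ - ((1-a*b)/(2*b)) • ⟨0,0,1,0⟩ := by
          rw [hp₂eq]; ext <;> simp <;> field_simp <;> ring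
        rw [hcomb]; exact sub_mem (V.smul_mem _ hp₂V) (V.smul_mem _ hjV)
      exact ⟨hiV, hjV, hkV⟩
  obtain ⟨hiV, hjV, hkV⟩ := hijk
  rw [eq_top_iff]
  rintro x -
  have hxdecomp : x = x.re • (1:ℍ[ℚ,a,b]) + x.imI • ⟨0,1,0,0⟩ + x.imJ • ⟨0,0,1,0⟩ +
      x.imK • ⟨0,0,0,1⟩ := by
    ext <;> simp
  rw [hxdecomp]
  exact add_mem (add_mem (add_mem (V.smul_mem _ h1V) (V.smul_mem _ hiV)) (V.smul_mem _ hjV))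
    (V.smul_mem _ hkV)
end

section
/- Let a, b be nonzero rational numbers and let B = ℍ[ℚ, a, b] be the corresponding quaternion algebra over ℚ. Assume B is a division ring and B is indefinite, i.e. ℍ[ℝ, a, b] is not a division ring. Let O ⊆ B be an order, i.e. a subring of B that is finitely generated as a ℤ-module and whose ℚ-linear span is all of B, and let Γ = {γ ∈ O : γ * star γ = 1} be its group of norm-one elements. Let ι : B → ℍ[ℝ, a, b] denote the canonical ℚ-algebra embedding induced by the inclusion ℚ ↪ ℝ (applied to each of the four coordinates). Suppose α is a unit of ℍ[ℝ, a, b] which normalizes ι(Γ), i.e. α * ι(γ) * α⁻¹ ∈ ι(Γ) and α⁻¹ * ι(γ) * α ∈ ι(Γ) for all γ ∈ Γ. Then there exist a nonzero real number r and a nonzero element β ∈ B such that α = r • ι(β). -/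
open Quaternion

/-- The canonical `ℚ`-algebra embedding `ℍ[ℚ, a, b] → ℍ[ℝ, a, b]` induced by the
inclusion `ℚ ↪ ℝ`, applied to each of the four coordinates. -/
def QuaternionAlgebra.toReal (a b : ℚ) (q : ℍ[ℚ, a, b]) : ℍ[ℝ, (a : ℝ), (b : ℝ)] :=
  ⟨(q.re : ℝ), (q.imI : ℝ), (q.imJ : ℝ), (q.imK : ℝ)⟩

namespace QuaternionAlgebra
variable {a b : ℚ}

@[simp] theorem toReal_re (x : ℍ[ℚ,a,b]) : (toReal a b x).re = (x.re : ℝ) := rfl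
@[simp] theorem toReal_imI (x : ℍ[ℚ,a,b]) : (toReal a b x).imI = (x.imI : ℝ) := rfl
@[simp] theorem toReal_imJ (x : ℍ[ℚ,a,b]) : (toReal a b x).imJ = (x.imJ : ℝ) := rfl
@[simp] theorem toReal_imK (x : ℍ[ℚ,a,b]) : (toReal a b x).imK = (x.imK : ℝ) := rfl

theorem toReal_mul (x y : ℍ[ℚ,a,b]) : toReal a b (x*y) = toReal a b x * toReal a b y := by
  ext <;> simp [QuaternionAlgebra.re_mul, QuaternionAlgebra.imI_mul, QuaternionAlgebra.imJ_mul, QuaternionAlgebra.imK_mul]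

theorem toReal_add (x y : ℍ[ℚ,a,b]) : toReal a b (x+y) = toReal a b x + toReal a b y := by
  ext <;> push_cast <;> simp

theorem toReal_one : toReal a b (1:ℍ[ℚ,a,b]) = 1 := by
  ext <;> simp

theorem toReal_coe (q : ℚ) : toReal a b (q : ℍ[ℚ,a,b]) = ((q:ℝ) : ℍ[ℝ,(a:ℝ),(b:ℝ)]) := by
  ext <;> simp

theorem toReal_smul (q : ℚ) (x : ℍ[ℚ,a,b]) :
    toReal a b (q • x) = (q:ℝ) • toReal a b x := by
  ext <;> simp

end QuaternionAlgebra

open QuaternionAlgebra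



theorem mul_star_self'' {R : Type*} [CommRing R] {c₁ c₂ : R} (x : ℍ[R,c₁,c₂]) :
    x * star x = ((x.re*x.re - c₁*x.imI*x.imI - c₂*x.imJ*x.imJ + c₁*c₂*x.imK*x.imK : R) : ℍ[R,c₁,c₂]) := by
  ext <;> simp [QuaternionAlgebra.re_mul, QuaternionAlgebra.imI_mul, QuaternionAlgebra.imJ_mul, QuaternionAlgebra.imK_mul] <;> ring

theorem star_mul_self'' {R : Type*} [CommRing R] {c₁ c₂ : R} (x : ℍ[R,c₁,c₂]) :
    star x * x = ((x.re*x.re - c₁*x.imI*x.imI - c₂*x.imJ*x.imJ + c₁*c₂*x.imK*x.imK : R) : ℍ[R,c₁,c₂]) := by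
  ext <;> simp [QuaternionAlgebra.re_mul, QuaternionAlgebra.imI_mul, QuaternionAlgebra.imJ_mul, QuaternionAlgebra.imK_mul] <;> ring

theorem re_mul_comm' {R : Type*} [CommRing R] {c₁ c₂ : R} (x y : ℍ[R,c₁,c₂]) :
    (x*y).re = (y*x).re := by
  simp only [QuaternionAlgebra.re_mul]; ring

section realside
variable {c₁ c₂ : ℝ}

theorem definite_isUnit (h₁ : c₁ < 0) (h₂ : c₂ < 0) (x : ℍ[ℝ,c₁,c₂]) (hx : x ≠ 0) :
    IsUnit x := by
  set n : ℝ := x.re*x.re - c₁*x.imI*x.imI - c₂*x.imJ*x.imJ + c₁*c₂*x.imK*x.imK with hn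
  have hnpos : 0 < n := by
    rw [hn]
    have h4 : ¬(x.re = 0 ∧ x.imI = 0 ∧ x.imJ = 0 ∧ x.imK = 0) := by
      rintro ⟨h5, h6, h7, h8⟩
      exact hx (by ext <;> simp [h5, h6, h7, h8])
    have hre := mul_self_nonneg x.re
    have hi := mul_self_nonneg x.imI
    have hj := mul_self_nonneg x.imJ
    have hk := mul_self_nonneg x.imK
    have t1 : 0 ≤ (-c₁) * (x.imI * x.imI) := mul_nonneg (by linarith) hi
    have t2 : 0 ≤ (-c₂) * (x.imJ * x.imJ) := mul_nonneg (by linarith) hj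
    have t3 : 0 ≤ (c₁*c₂) * (x.imK * x.imK) := mul_nonneg (le_of_lt (mul_pos_of_neg_of_neg h₁ h₂)) hk
    rcases not_and_or.1 h4 with h | h
    · nlinarith [mul_self_pos.2 h, t1, t2, t3]
    rcases not_and_or.1 h with h | h
    · nlinarith [mul_self_pos.2 h, t1, t2, t3]
    rcases not_and_or.1 h with h | h
    · nlinarith [mul_self_pos.2 h, t1, t2, t3]
    · nlinarith [mul_pos (mul_pos_of_neg_of_neg h₁ h₂) (mul_self_pos.2 h), t1, t2, hre]
  have hnne : n ≠ 0 := ne_of_gt hnpos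
  refine ⟨⟨x, n⁻¹ • star x, ?_, ?_⟩, rfl⟩
  · rw [mul_smul_comm, mul_star_self'', ← hn, QuaternionAlgebra.smul_coe,
      inv_mul_cancel₀ hnne, QuaternionAlgebra.coe_one]
  · rw [smul_mul_assoc, star_mul_self'', ← hn, QuaternionAlgebra.smul_coe,
      inv_mul_cancel₀ hnne, QuaternionAlgebra.coe_one]

theorem commI (hc₁ : c₁ ≠ 0) (μ : ℍ[ℝ,c₁,c₂])
    (h : μ * (⟨0,1,0,0⟩ : ℍ[ℝ,c₁,c₂]) = (⟨0,1,0,0⟩ : ℍ[ℝ,c₁,c₂]) * μ) :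
    μ.imJ = 0 ∧ μ.imK = 0 := by
  have hj := congrArg QuaternionAlgebra.imJ h
  have hk := congrArg QuaternionAlgebra.imK h
  simp only [QuaternionAlgebra.imJ_mul, QuaternionAlgebra.imK_mul] at hj hk
  norm_num at hj hk
  refine ⟨by linarith, ?_⟩
  have h5 : c₁ * μ.imK = 0 := by linarith
  exact (mul_eq_zero.1 h5).resolve_left hc₁

theorem commJ (hc₂ : c₂ ≠ 0) (μ : ℍ[ℝ,c₁,c₂])
    (h : μ * (⟨0,0,1,0⟩ : ℍ[ℝ,c₁,c₂]) = (⟨0,0,1,0⟩ : ℍ[ℝ,c₁,c₂]) * μ) :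
    μ.imI = 0 ∧ μ.imK = 0 := by
  have hi := congrArg QuaternionAlgebra.imI h
  have hk := congrArg QuaternionAlgebra.imK h
  simp only [QuaternionAlgebra.imI_mul, QuaternionAlgebra.imK_mul] at hi hk
  norm_num at hi hk
  refine ⟨by linarith, ?_⟩
  have h5 : c₂ * μ.imK = 0 := by linarith
  exact (mul_eq_zero.1 h5).resolve_left hc₂

theorem commK (hc₁ : c₁ ≠ 0) (hc₂ : c₂ ≠ 0) (μ : ℍ[ℝ,c₁,c₂])
    (h : μ * (⟨0,0,0,1⟩ : ℍ[ℝ,c₁,c₂]) = (⟨0,0,0,1⟩ : ℍ[ℝ,c₁,c₂]) * μ) :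
    μ.imI = 0 ∧ μ.imJ = 0 := by
  have hi := congrArg QuaternionAlgebra.imI h
  have hj := congrArg QuaternionAlgebra.imJ h
  simp only [QuaternionAlgebra.imI_mul, QuaternionAlgebra.imJ_mul] at hi hj
  norm_num at hi hj
  constructor
  · have h5 : c₁ * μ.imI = 0 := by linarith
    exact (mul_eq_zero.1 h5).resolve_left hc₁
  · have h5 : c₂ * μ.imJ = 0 := by linarith
    exact (mul_eq_zero.1 h5).resolve_left hc₂

theorem scalar_of_ims (μ : ℍ[ℝ,c₁,c₂]) (h1 : μ.imI = 0) (h2 : μ.imJ = 0) (h3 : μ.imK = 0) :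
    ∃ r : ℝ, μ = r • (1:ℍ[ℝ,c₁,c₂]) := by
  refine ⟨μ.re, ?_⟩
  ext <;> simp [h1, h2, h3]

end realside


namespace QuaternionAlgebra
section generic
variable {R : Type*} [CommRing R] {c₁ c₂ : R}

theorem mul_star_self' (x : ℍ[R,c₁,c₂]) :
    x * star x = ((x.re*x.re - c₁*x.imI*x.imI - c₂*x.imJ*x.imJ + c₁*c₂*x.imK*x.imK : R) : ℍ[R,c₁,c₂]) := by
  ext <;> simp [QuaternionAlgebra.re_mul, QuaternionAlgebra.imI_mul, QuaternionAlgebra.imJ_mul, QuaternionAlgebra.imK_mul] <;> ring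

theorem star_mul_self' (x : ℍ[R,c₁,c₂]) :
    star x * x = ((x.re*x.re - c₁*x.imI*x.imI - c₂*x.imJ*x.imJ + c₁*c₂*x.imK*x.imK : R) : ℍ[R,c₁,c₂]) := by
  ext <;> simp [QuaternionAlgebra.re_mul, QuaternionAlgebra.imI_mul, QuaternionAlgebra.imJ_mul, QuaternionAlgebra.imK_mul] <;> ring

theorem re_mul_comm (x y : ℍ[R,c₁,c₂]) : (x*y).re = (y*x).re := by
  simp only [QuaternionAlgebra.re_mul]; ring

end generic
end QuaternionAlgebra

section clear
variable {a b : ℚ}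

theorem exists_nat_smul_mem (O : Subring ℍ[ℚ,a,b]) (x : ℍ[ℚ,a,b])
    (hx : x ∈ Submodule.span ℚ (O : Set ℍ[ℚ,a,b])) :
    ∃ n : ℕ, 0 < n ∧ ((n:ℚ)•x) ∈ O := by
  have hz : ∀ (k : ℤ) (z : ℍ[ℚ,a,b]), z ∈ O → ((k:ℚ)•z) ∈ O := by
    intro k z hzO
    rw [Int.cast_smul_eq_zsmul]
    exact zsmul_mem hzO k
  induction hx using Submodule.span_induction with
  | mem z hzO => exact ⟨1, one_pos, by simpa using hzO⟩
  | zero => exact ⟨1, one_pos, by simpa using O.zero_mem⟩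
  | add y z _ _ hy hz' =>
      obtain ⟨m, hm, hmy⟩ := hy
      obtain ⟨n, hn, hnz⟩ := hz'
      refine ⟨m*n, Nat.mul_pos hm hn, ?_⟩
      have : ((m*n : ℕ):ℚ) • (y+z) = ((n:ℤ):ℚ) • ((m:ℚ)•y) + ((m:ℤ):ℚ) • ((n:ℚ)•z) := by
        push_cast
        rw [smul_smul, smul_smul, smul_add]
        ring_nf
      rw [this]
      exact O.add_mem (hz _ _ hmy) (hz _ _ hnz)
  | smul q y _ hy =>
      obtain ⟨n, hn, hny⟩ := hy
      refine ⟨q.den * n, Nat.mul_pos q.pos hn, ?_⟩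
      have : ((q.den * n : ℕ):ℚ) • (q • y) = ((q.num:ℤ):ℚ) • ((n:ℚ)•y) := by
        push_cast
        rw [smul_smul, smul_smul]
        congr 1
        have hden : ((q.den:ℚ)) ≠ 0 := Nat.cast_ne_zero.2 q.den_nz
        have hq : (q.num:ℚ) = q * q.den := (div_eq_iff hden).1 (Rat.num_div_den q)
        rw [hq]; ring
      rw [this]
      exact hz _ _ hny

end clear



section skolem
variable {a b : ℚ}

theorem no_zero_div (hdiv : ∀ x : ℍ[ℚ,a,b], x ≠ 0 → IsUnit x) {x y : ℍ[ℚ,a,b]}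
    (h : x*y = 0) : x = 0 ∨ y = 0 := by
  by_cases hx : x = 0
  · exact Or.inl hx
  · right
    obtain ⟨v, hv⟩ := hdiv x hx
    calc y = (↑v⁻¹ * v) * y := by rw [Units.inv_mul, one_mul]
    _ = ↑v⁻¹ * (x*y) := by rw [mul_assoc, hv]
    _ = 0 := by rw [h, mul_zero]

theorem smul_one_inj {c d : ℚ} (h : c•(1:ℍ[ℚ,a,b]) = d•(1:ℍ[ℚ,a,b])) : c = d := by
  have := congrArg QuaternionAlgebra.re h
  simpa using this

theorem skolem (hdiv : ∀ x : ℍ[ℚ,a,b], x ≠ 0 → IsUnit x)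
    {A₁ A₂ : ℚ} (hA₁ns : ¬IsSquare A₁) (hA₂0 : A₂ ≠ 0)
    {u₁ u₂ u₁' u₂' : ℍ[ℚ,a,b]}
    (h1 : u₁*u₁ = A₁•(1:ℍ[ℚ,a,b])) (h2 : u₂*u₂ = A₂•(1:ℍ[ℚ,a,b])) (h12 : u₂*u₁ = -(u₁*u₂))
    (h1' : u₁'*u₁' = A₁•(1:ℍ[ℚ,a,b])) (h2' : u₂'*u₂' = A₂•(1:ℍ[ℚ,a,b]))
    (h12' : u₂'*u₁' = -(u₁'*u₂'))
    (hspan4 : ∀ x : ℍ[ℚ,a,b], ∃ p q r s : ℚ,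
      x = p•(1:ℍ[ℚ,a,b]) + q•u₁ + r•u₂ + s•(u₁*u₂)) :
    ∃ β : ℍ[ℚ,a,b], β ≠ 0 ∧ β * u₁ = u₁' * β ∧ β * u₂ = u₂' * β := by
  have hA₁0 : A₁ ≠ 0 := fun h => hA₁ns (h ▸ ⟨0, by norm_num⟩)
  -- u₁ is not a scalar
  have hns : ∀ q : ℚ, u₁ ≠ q•(1:ℍ[ℚ,a,b]) := by
    intro q hq
    apply hA₁ns
    refine ⟨q, ?_⟩
    have h := h1
    rw [hq] at h
    have : (q*q)•(1:ℍ[ℚ,a,b]) = A₁•(1:ℍ[ℚ,a,b]) := by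
      rw [← h, smul_mul_assoc, mul_smul_comm, one_mul, smul_smul]
    exact (smul_one_inj this).symm
  have hextract : ∀ c d : ℚ, c•(1:ℍ[ℚ,a,b]) + d•u₁ = 0 → c = 0 ∧ d = 0 := by
    intro c d hcd
    by_cases hd : d = 0
    · subst hd
      constructor
      · have : c•(1:ℍ[ℚ,a,b]) = (0:ℚ)•(1:ℍ[ℚ,a,b]) := by simpa using hcd
        exact smul_one_inj this
      · rfl
    · exfalso
      apply hns (-(c/d))
      have h1' : u₁ = d⁻¹ • (-(c•(1:ℍ[ℚ,a,b]))) := by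
        have : d•u₁ = -(c•(1:ℍ[ℚ,a,b])) := eq_neg_of_add_eq_zero_right hcd
        rw [← this, smul_smul, inv_mul_cancel₀ hd, one_smul]
      rw [h1', smul_neg, smul_smul]
      rw [show d⁻¹ * c = c/d by field_simp]
      rw [← neg_smul]
  have hu₁ne : u₁ ≠ 0 := by
    intro h
    apply hA₁0
    have : (0:ℚ)•(1:ℍ[ℚ,a,b]) = A₁•(1:ℍ[ℚ,a,b]) := by
      rw [← h1, h, mul_zero, zero_smul]
    exact (smul_one_inj this).symm
  have hu₂ne : u₂ ≠ 0 := by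
    intro h
    apply hA₂0
    have : (0:ℚ)•(1:ℍ[ℚ,a,b]) = A₂•(1:ℍ[ℚ,a,b]) := by
      rw [← h2, h, mul_zero, zero_smul]
    exact (smul_one_inj this).symm
  -- nested rewrite helpers
  have hn1 : ∀ x, u₁*(u₁*x) = A₁•x := by
    intro x; rw [← mul_assoc, h1, smul_mul_assoc, one_mul]
  have hn1' : ∀ x, u₁'*(u₁'*x) = A₁•x := by
    intro x; rw [← mul_assoc, h1', smul_mul_assoc, one_mul]
  have hn2 : ∀ x, u₂*(u₂*x) = A₂•x := by
    intro x; rw [← mul_assoc, h2, smul_mul_assoc, one_mul]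
  have han : ∀ x, u₂*(u₁*x) = -(u₁*(u₂*x)) := by
    intro x; rw [← mul_assoc, h12, neg_mul, mul_assoc]
  -- Step 1 : conjugating u₁ to u₁'
  obtain ⟨β₁, hβ₁ne, hβ₁u⟩ : ∃ β₁ : ℍ[ℚ,a,b], β₁ ≠ 0 ∧ β₁ * u₁ = u₁' * β₁ := by
    by_cases hw : u₁' * u₁ + A₁•(1:ℍ[ℚ,a,b]) = 0
    · have hu₁' : u₁' = -u₁ := by
        have h0 : (u₁' + u₁) * u₁ = 0 := by
          rw [add_mul, h1, hw]
        rcases no_zero_div hdiv h0 with h | h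
        · have := eq_neg_of_add_eq_zero_left h
          exact this
        · exact absurd h hu₁ne
      refine ⟨u₂, hu₂ne, ?_⟩
      rw [hu₁', neg_mul, ← h12]
    · refine ⟨u₁' * u₁ + A₁•(1:ℍ[ℚ,a,b]), hw, ?_⟩
      calc (u₁' * u₁ + A₁•(1:ℍ[ℚ,a,b])) * u₁
          = u₁' * (u₁*u₁) + A₁•u₁ := by
            rw [add_mul, mul_assoc, smul_mul_assoc, one_mul]
      _ = A₁•u₁' + A₁•u₁ := by rw [h1, mul_smul_comm, mul_one]
      _ = u₁' * (u₁' * u₁) + u₁' * (A₁•(1:ℍ[ℚ,a,b])) := by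
            rw [hn1', mul_smul_comm, mul_one]; abel
      _ = u₁' * (u₁' * u₁ + A₁•(1:ℍ[ℚ,a,b])) := by rw [mul_add]
  -- inverse of β₁
  obtain ⟨bu, hbu⟩ := hdiv β₁ hβ₁ne
  set ι₁ : ℍ[ℚ,a,b] := ↑bu⁻¹ with hι₁
  have hi1 : ι₁ * β₁ = 1 := by rw [hι₁, ← hbu]; exact Units.inv_mul _
  have hi2 : β₁ * ι₁ = 1 := by rw [hι₁, ← hbu]; exact Units.mul_inv _
  have hcomm1 : u₁ * ι₁ = ι₁ * u₁' := by
    calc u₁ * ι₁ = (ι₁ * β₁) * (u₁ * ι₁) := by rw [hi1, one_mul]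
    _ = ι₁ * ((β₁ * u₁) * ι₁) := by noncomm_ring
    _ = ι₁ * ((u₁' * β₁) * ι₁) := by rw [hβ₁u]
    _ = ι₁ * (u₁' * (β₁ * ι₁)) := by rw [mul_assoc]
    _ = ι₁ * u₁' := by rw [hi2, mul_one]
  set v : ℍ[ℚ,a,b] := ι₁ * (u₂' * β₁) with hvdef
  have hvv : v * v = A₂•(1:ℍ[ℚ,a,b]) := by
    calc v * v = ι₁ * (u₂' * ((β₁ * ι₁) * (u₂' * β₁))) := by
          rw [hvdef]; noncomm_ring
    _ = ι₁ * ((u₂' * u₂') * β₁) := by rw [hi2, one_mul]; noncomm_ring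
    _ = A₂ • (ι₁ * β₁) := by rw [h2', smul_mul_assoc, one_mul, mul_smul_comm]
    _ = A₂•(1:ℍ[ℚ,a,b]) := by rw [hi1]
  have hvu₁ : v * u₁ = -(u₁ * v) := by
    calc v * u₁ = ι₁ * (u₂' * (β₁ * u₁)) := by rw [hvdef]; noncomm_ring
    _ = ι₁ * (u₂' * (u₁' * β₁)) := by rw [hβ₁u]
    _ = ι₁ * ((u₂' * u₁') * β₁) := by rw [mul_assoc]
    _ = -(ι₁ * (u₁' * (u₂' * β₁))) := by rw [h12']; noncomm_ring
    _ = -((ι₁ * u₁') * (u₂' * β₁)) := by rw [mul_assoc]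
    _ = -((u₁ * ι₁) * (u₂' * β₁)) := by rw [hcomm1]
    _ = -(u₁ * v) := by rw [hvdef]; noncomm_ring
  -- decompose v
  obtain ⟨p, q, r, s, hv⟩ := hspan4 v
  have hE : v*u₁ + u₁*v = (2*(q*A₁))•(1:ℍ[ℚ,a,b]) + (2*p)•u₁ := by
    rw [hv]
    simp only [add_mul, mul_add, smul_mul_assoc, mul_smul_comm, one_mul, mul_one,
      hn1, hn2, han, h1, h2, h12, smul_neg, smul_smul, neg_mul, mul_neg, mul_assoc]
    module
  obtain ⟨hp, hq⟩ : p = 0 ∧ q = 0 := by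
    have h0 : (2*(q*A₁))•(1:ℍ[ℚ,a,b]) + (2*p)•u₁ = 0 := by
      rw [← hE, hvu₁]; abel
    obtain ⟨hc, hd⟩ := hextract _ _ h0
    constructor
    · linarith
    · have hqa : q * A₁ = 0 := by linarith
      rcases mul_eq_zero.1 hqa with h | h
      · exact h
      · exact absurd h hA₁0
  subst hp; subst hq
  rw [zero_smul, zero_smul, zero_add, zero_add] at hv
  set w : ℍ[ℚ,a,b] := r•(1:ℍ[ℚ,a,b]) + s•u₁ with hwdef
  set wt : ℍ[ℚ,a,b] := r•(1:ℍ[ℚ,a,b]) - s•u₁ with hwtdef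
  have hvw : v = w * u₂ := by
    rw [hv, hwdef, add_mul, smul_mul_assoc, smul_mul_assoc, one_mul]
  have hu₂w : u₂ * w = wt * u₂ := by
    rw [hwdef, hwtdef]
    simp only [mul_add, add_mul, sub_mul, mul_smul_comm, smul_mul_assoc, one_mul, mul_one, h12]
    module
  have hwwt : w * wt = (r*r - A₁*(s*s))•(1:ℍ[ℚ,a,b]) := by
    rw [hwdef, hwtdef]
    simp only [mul_sub, sub_mul, mul_add, add_mul, mul_smul_comm, smul_mul_assoc,
      one_mul, mul_one, h1, smul_smul]
    module
  have hr1 : r*r - A₁*(s*s) = 1 := by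
    have hvv2 : v*v = ((r*r-A₁*(s*s))*A₂)•(1:ℍ[ℚ,a,b]) := by
      calc v*v = w * ((u₂*w) * u₂) := by rw [hvw]; noncomm_ring
      _ = w * ((wt*u₂)*u₂) := by rw [hu₂w]
      _ = (w*wt) * (u₂*u₂) := by noncomm_ring
      _ = ((r*r-A₁*(s*s))*A₂)•(1:ℍ[ℚ,a,b]) := by
          rw [hwwt, h2, smul_mul_assoc, one_mul, smul_smul]
    have heq : ((r*r-A₁*(s*s))*A₂)•(1:ℍ[ℚ,a,b]) = A₂•(1:ℍ[ℚ,a,b]) := by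
      rw [← hvv2, hvv]
    have h3 := smul_one_inj heq
    have h4 : (r*r - A₁*(s*s)) * A₂ = 1 * A₂ := by rw [one_mul]; exact h3
    exact mul_right_cancel₀ hA₂0 h4
  have hwwt1 : w * wt = 1 := by rw [hwwt, hr1, one_smul]
  obtain ⟨β₂, hβ₂ne, hc1, hc2⟩ : ∃ β₂ : ℍ[ℚ,a,b], β₂ ≠ 0 ∧ β₂*u₁ = u₁*β₂ ∧ β₂*u₂ = v*β₂ := by
    by_cases hcase : (1:ℍ[ℚ,a,b]) + w = 0
    · have hw1 : w = -(1:ℍ[ℚ,a,b]) := eq_neg_of_add_eq_zero_right hcase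
      have hvneg : v = -u₂ := by rw [hvw, hw1, neg_mul, one_mul]
      refine ⟨u₁, hu₁ne, rfl, ?_⟩
      rw [hvneg, neg_mul, h12, neg_neg]
    · refine ⟨1 + w, hcase, ?_, ?_⟩
      · rw [hwdef]
        simp only [add_mul, mul_add, smul_mul_assoc, mul_smul_comm, one_mul, mul_one]
      · calc (1+w)*u₂ = u₂ + w*u₂ := by rw [add_mul, one_mul]
        _ = (w*wt)*u₂ + w*u₂ := by rw [hwwt1, one_mul]
        _ = w*(wt*u₂) + w*u₂ := by rw [mul_assoc]
        _ = w*(u₂*w) + w*u₂ := by rw [hu₂w]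
        _ = (w*u₂)*(1+w) := by noncomm_ring
        _ = v*(1+w) := by rw [hvw]
  refine ⟨β₁ * β₂, ?_, ?_, ?_⟩
  · intro h
    rcases no_zero_div hdiv h with h' | h'
    · exact hβ₁ne h'
    · exact hβ₂ne h'
  · calc (β₁*β₂)*u₁ = β₁*(β₂*u₁) := by rw [mul_assoc]
    _ = β₁*(u₁*β₂) := by rw [hc1]
    _ = (β₁*u₁)*β₂ := by rw [mul_assoc]
    _ = (u₁'*β₁)*β₂ := by rw [hβ₁u]
    _ = u₁'*(β₁*β₂) := by rw [mul_assoc]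
  · calc (β₁*β₂)*u₂ = β₁*(β₂*u₂) := by rw [mul_assoc]
    _ = β₁*(v*β₂) := by rw [hc2]
    _ = ((β₁*ι₁)*(u₂'*β₁))*β₂ := by rw [hvdef]; noncomm_ring
    _ = (u₂'*β₁)*β₂ := by rw [hi2, one_mul]
    _ = u₂'*(β₁*β₂) := by rw [mul_assoc]

end skolem

section basis
variable (a b : ℚ)

def qI : ℍ[ℚ,a,b] := ⟨0,1,0,0⟩
def qJ : ℍ[ℚ,a,b] := ⟨0,0,1,0⟩
def qK : ℍ[ℚ,a,b] := ⟨0,0,0,1⟩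

variable {a b}

theorem hII : qI a b * qI a b = a•(1:ℍ[ℚ,a,b]) := by
  ext <;> simp [qI, QuaternionAlgebra.re_mul, QuaternionAlgebra.imI_mul, QuaternionAlgebra.imJ_mul, QuaternionAlgebra.imK_mul]
theorem hJJ : qJ a b * qJ a b = b•(1:ℍ[ℚ,a,b]) := by
  ext <;> simp [qJ, QuaternionAlgebra.re_mul, QuaternionAlgebra.imI_mul, QuaternionAlgebra.imJ_mul, QuaternionAlgebra.imK_mul]
theorem hKK : qK a b * qK a b = (-(a*b))•(1:ℍ[ℚ,a,b]) := by
  ext <;> simp [qK, QuaternionAlgebra.re_mul, QuaternionAlgebra.imI_mul, QuaternionAlgebra.imJ_mul, QuaternionAlgebra.imK_mul]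
theorem hJI : qJ a b * qI a b = -(qI a b * qJ a b) := by
  ext <;> simp [qI, qJ, QuaternionAlgebra.re_mul, QuaternionAlgebra.imI_mul, QuaternionAlgebra.imJ_mul, QuaternionAlgebra.imK_mul]
theorem hKI : qK a b * qI a b = -(qI a b * qK a b) := by
  ext <;> simp [qI, qK, QuaternionAlgebra.re_mul, QuaternionAlgebra.imI_mul, QuaternionAlgebra.imJ_mul, QuaternionAlgebra.imK_mul]
theorem hJK : qJ a b * qK a b = -(qK a b * qJ a b) := by
  ext <;> simp [qJ, qK, QuaternionAlgebra.re_mul, QuaternionAlgebra.imI_mul, QuaternionAlgebra.imJ_mul, QuaternionAlgebra.imK_mul]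
theorem sI : star (qI a b) = -(qI a b) := by ext <;> simp [qI]
theorem sJ : star (qJ a b) = -(qJ a b) := by ext <;> simp [qJ]
theorem sK : star (qK a b) = -(qK a b) := by ext <;> simp [qK]

theorem nscI : ∀ q : ℚ, qI a b ≠ q•(1:ℍ[ℚ,a,b]) := by
  intro q h
  simpa [qI] using congrArg QuaternionAlgebra.imI h
theorem nscJ : ∀ q : ℚ, qJ a b ≠ q•(1:ℍ[ℚ,a,b]) := by
  intro q h
  simpa [qJ] using congrArg QuaternionAlgebra.imJ h
theorem nscK : ∀ q : ℚ, qK a b ≠ q•(1:ℍ[ℚ,a,b]) := by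
  intro q h
  simpa [qK] using congrArg QuaternionAlgebra.imK h

theorem spanIJ : ∀ x : ℍ[ℚ,a,b], ∃ p q r s : ℚ,
    x = p•(1:ℍ[ℚ,a,b]) + q•(qI a b) + r•(qJ a b) + s•(qI a b * qJ a b) := by
  intro x
  refine ⟨x.re, x.imI, x.imJ, x.imK, ?_⟩
  ext <;> simp [qI, qJ, QuaternionAlgebra.re_mul, QuaternionAlgebra.imI_mul, QuaternionAlgebra.imJ_mul, QuaternionAlgebra.imK_mul]
theorem spanIK (ha : a ≠ 0) : ∀ x : ℍ[ℚ,a,b], ∃ p q r s : ℚ,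
    x = p•(1:ℍ[ℚ,a,b]) + q•(qI a b) + r•(qK a b) + s•(qI a b * qK a b) := by
  intro x
  refine ⟨x.re, x.imI, x.imK, x.imJ/a, ?_⟩
  ext <;> simp [qI, qK, QuaternionAlgebra.re_mul, QuaternionAlgebra.imI_mul, QuaternionAlgebra.imJ_mul, QuaternionAlgebra.imK_mul] <;> field_simp
theorem spanKJ (hb : b ≠ 0) : ∀ x : ℍ[ℚ,a,b], ∃ p q r s : ℚ,
    x = p•(1:ℍ[ℚ,a,b]) + q•(qK a b) + r•(qJ a b) + s•(qK a b * qJ a b) := by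
  intro x
  refine ⟨x.re, x.imK, x.imJ, x.imI/b, ?_⟩
  ext <;> simp [qK, qJ, QuaternionAlgebra.re_mul, QuaternionAlgebra.imI_mul, QuaternionAlgebra.imJ_mul, QuaternionAlgebra.imK_mul] <;> field_simp

theorem tI : QuaternionAlgebra.toReal a b (qI a b) = (⟨0,1,0,0⟩ : ℍ[ℝ,(a:ℝ),(b:ℝ)]) := by
  ext <;> simp [qI, QuaternionAlgebra.toReal]
theorem tJ : QuaternionAlgebra.toReal a b (qJ a b) = (⟨0,0,1,0⟩ : ℍ[ℝ,(a:ℝ),(b:ℝ)]) := by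
  ext <;> simp [qJ, QuaternionAlgebra.toReal]
theorem tK : QuaternionAlgebra.toReal a b (qK a b) = (⟨0,0,0,1⟩ : ℍ[ℝ,(a:ℝ),(b:ℝ)]) := by
  ext <;> simp [qK, QuaternionAlgebra.toReal]

theorem coe_eq_smul_one (q : ℚ) : (q : ℍ[ℚ,a,b]) = q•(1:ℍ[ℚ,a,b]) := by
  rw [← QuaternionAlgebra.coe_mul_eq_smul, mul_one]

theorem nonsquare_of (hdiv : ∀ x : ℍ[ℚ,a,b], x ≠ 0 → IsUnit x)
    {u : ℍ[ℚ,a,b]} {A : ℚ} (hu : u*u = A•(1:ℍ[ℚ,a,b]))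
    (hnsc : ∀ q : ℚ, u ≠ q•(1:ℍ[ℚ,a,b])) : ¬ IsSquare A := by
  rintro ⟨c, hc⟩
  subst hc
  have h0 : (c•(1:ℍ[ℚ,a,b]) + u) * (c•(1:ℍ[ℚ,a,b]) - u) = 0 := by
    simp only [add_mul, mul_sub, smul_mul_assoc, mul_smul_comm, one_mul, mul_one,
      smul_smul, hu]
    module
  rcases no_zero_div hdiv h0 with h | h
  · refine hnsc (-c) ?_
    have := eq_neg_of_add_eq_zero_right h
    rw [this, neg_smul]
  · exact hnsc c (sub_eq_zero.1 h).symm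

end basis

section gam
variable {a b : ℚ}

theorem coe_int_quat (x : ℤ) : (((x:ℚ)) : ℍ[ℚ,a,b]) = (x : ℍ[ℚ,a,b]) := by
  ext <;> simp [QuaternionAlgebra.re_intCast, QuaternionAlgebra.imI_intCast,
    QuaternionAlgebra.imJ_intCast, QuaternionAlgebra.imK_intCast]

theorem exists_gamma (O : Subring ℍ[ℚ,a,b])
    (hspan : Submodule.span ℚ (O : Set ℍ[ℚ,a,b]) = ⊤)
    (u : ℍ[ℚ,a,b]) (A : ℚ) (hu : u*u = A•(1:ℍ[ℚ,a,b])) (hsu : star u = -u)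
    (hA : 0 < A) (hns : ¬ IsSquare A) :
    ∃ t s : ℚ, s ≠ 0 ∧ t^2 - A*s^2 = 1 ∧ (t•(1:ℍ[ℚ,a,b]) + s•u) ∈ O ∧
      (t•(1:ℍ[ℚ,a,b]) + s•u) * star (t•(1:ℍ[ℚ,a,b]) + s•u) = 1 := by
  obtain ⟨n, hn, hnu⟩ := exists_nat_smul_mem O u (by rw [hspan]; trivial)
  set N : ℤ := (n : ℤ) * A.den with hN
  have hNne : N ≠ 0 := by positivity
  have hN0 : (N:ℚ) ≠ 0 := by exact_mod_cast hNne
  have hNu : ((N:ℚ))•u ∈ O := by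
    have : ((N:ℚ))•u = ((A.den : ℤ):ℚ) • ((n:ℚ)•u) := by
      rw [smul_smul]; congr 1; push_cast [hN]; ring
    rw [this, Int.cast_smul_eq_zsmul]
    exact zsmul_mem hnu _
  set D : ℤ := A.num * A.den * n^2 with hD
  have hden : ((A.den:ℚ)) ≠ 0 := Nat.cast_ne_zero.2 A.den_nz
  have hnum : (A.num:ℚ) = A * A.den := (div_eq_iff hden).1 (Rat.num_div_den A)
  have hDq : ((D:ℤ):ℚ) = A * (N:ℚ)^2 := by push_cast [hD, hN, hnum]; ring
  have hD0 : 0 < D := by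
    have h1 : 0 < A.num := Rat.num_pos.2 hA
    positivity
  have hDns : ¬ IsSquare D := by
    rintro ⟨e, he⟩
    apply hns
    refine ⟨(e:ℚ)/(N:ℚ), ?_⟩
    have h2 : ((D:ℤ):ℚ) = (e:ℚ)*(e:ℚ) := by exact_mod_cast congrArg (fun z : ℤ => (z:ℚ)) he
    rw [hDq] at h2
    field_simp
    nlinarith [h2]
  obtain ⟨x, y, hxy, hy⟩ := Pell.exists_of_not_isSquare hD0 hDns
  set t : ℚ := (x:ℚ) with ht
  set s : ℚ := ((N*y : ℤ):ℚ) with hs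
  have hsne : s ≠ 0 := by
    rw [hs]; exact_mod_cast mul_ne_zero hNne hy
  have hpell : t^2 - A*s^2 = 1 := by
    have : t^2 - A*s^2 = ((x^2 - D*y^2 : ℤ) : ℚ) := by
      rw [ht, hs]; push_cast; rw [hDq]; ring
    rw [this, hxy]; norm_num
  have hure : u.re = 0 := by
    have h := congrArg QuaternionAlgebra.re hsu
    simp at h
    linarith
  have hA' : a*u.imI*u.imI + b*u.imJ*u.imJ - a*b*u.imK*u.imK = A := by
    have h := congrArg QuaternionAlgebra.re hu
    simp [QuaternionAlgebra.re_mul, hure] at h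
    linarith
  refine ⟨t, s, hsne, hpell, ?_, ?_⟩
  · apply O.add_mem
    · rw [← coe_eq_smul_one, ht, coe_int_quat]; exact intCast_mem O x
    · have : s • u = ((y:ℤ):ℚ) • (((N:ℚ))•u) := by
        rw [smul_smul, hs]; push_cast; ring_nf
      rw [this, Int.cast_smul_eq_zsmul]
      exact zsmul_mem hNu _
  · rw [mul_star_self'']
    have h1 : (t•(1:ℍ[ℚ,a,b]) + s•u).re = t := by simp [hure]
    have h2 : (t•(1:ℍ[ℚ,a,b]) + s•u).imI = s*u.imI := by simp
    have h3 : (t•(1:ℍ[ℚ,a,b]) + s•u).imJ = s*u.imJ := by simp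
    have h4 : (t•(1:ℍ[ℚ,a,b]) + s•u).imK = s*u.imK := by simp
    rw [h1, h2, h3, h4]
    have : t*t - a*(s*u.imI)*(s*u.imI) - b*(s*u.imJ)*(s*u.imJ) + a*b*(s*u.imK)*(s*u.imK) = 1 := by
      linear_combination hpell - s^2*hA'
    rw [this, QuaternionAlgebra.coe_one]

end gam
section mainaux
variable {a b : ℚ}

theorem main_aux (ha : a ≠ 0) (hb : b ≠ 0)
    (hdiv : ∀ x : ℍ[ℚ, a, b], x ≠ 0 → IsUnit x)
    (O : Subring ℍ[ℚ, a, b])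
    (hspan : Submodule.span ℚ (O : Set ℍ[ℚ, a, b]) = ⊤)
    (Γ : Set ℍ[ℚ, a, b]) (hΓ : Γ = {γ : ℍ[ℚ, a, b] | γ ∈ O ∧ γ * star γ = 1})
    (α : (ℍ[ℝ, (a : ℝ), (b : ℝ)])ˣ)
    (hα : ∀ γ ∈ Γ, (α : ℍ[ℝ, (a : ℝ), (b : ℝ)]) * QuaternionAlgebra.toReal a b γ *
        ((α⁻¹ : _ˣ) : ℍ[ℝ, (a : ℝ), (b : ℝ)]) ∈ QuaternionAlgebra.toReal a b '' Γ ∧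
      ((α⁻¹ : _ˣ) : ℍ[ℝ, (a : ℝ), (b : ℝ)]) * QuaternionAlgebra.toReal a b γ *
        (α : ℍ[ℝ, (a : ℝ), (b : ℝ)]) ∈ QuaternionAlgebra.toReal a b '' Γ)
    (u₁ u₂ : ℍ[ℚ,a,b]) (A₁ A₂ : ℚ)
    (hU1 : u₁*u₁ = A₁•(1:ℍ[ℚ,a,b])) (hU2 : u₂*u₂ = A₂•(1:ℍ[ℚ,a,b]))
    (h12 : u₂*u₁ = -(u₁*u₂))
    (hst1 : star u₁ = -u₁) (hst2 : star u₂ = -u₂)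
    (hA₁pos : 0 < A₁) (hA₂pos : 0 < A₂)
    (hA₁ns : ¬IsSquare A₁) (hA₂ns : ¬IsSquare A₂)
    (hspan4 : ∀ x : ℍ[ℚ,a,b], ∃ p q r s : ℚ,
      x = p•(1:ℍ[ℚ,a,b]) + q•u₁ + r•u₂ + s•(u₁*u₂))
    (hcomm : ∀ μ : ℍ[ℝ,(a:ℝ),(b:ℝ)], μ * QuaternionAlgebra.toReal a b u₁ =
        QuaternionAlgebra.toReal a b u₁ * μ →
      μ * QuaternionAlgebra.toReal a b u₂ = QuaternionAlgebra.toReal a b u₂ * μ →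
      ∃ r : ℝ, μ = r•(1:ℍ[ℝ,(a:ℝ),(b:ℝ)])) :
    ∃ r : ℝ, r ≠ 0 ∧ ∃ β : ℍ[ℚ, a, b], β ≠ 0 ∧
      (α : ℍ[ℝ, (a : ℝ), (b : ℝ)]) = r • QuaternionAlgebra.toReal a b β := by
  obtain ⟨t₁, s₁, hs₁ne, hpell₁, hmem₁, hnorm₁⟩ := exists_gamma O hspan u₁ A₁ hU1 hst1 hA₁pos hA₁ns
  obtain ⟨t₂, s₂, hs₂ne, hpell₂, hmem₂, hnorm₂⟩ := exists_gamma O hspan u₂ A₂ hU2 hst2 hA₂pos hA₂ns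
  set γ₁ : ℍ[ℚ,a,b] := t₁•(1:ℍ[ℚ,a,b]) + s₁•u₁ with hγ₁def
  set γ₂ : ℍ[ℚ,a,b] := t₂•(1:ℍ[ℚ,a,b]) + s₂•u₂ with hγ₂def
  have hγ₁Γ : γ₁ ∈ Γ := by rw [hΓ]; exact ⟨hmem₁, hnorm₁⟩
  have hγ₂Γ : γ₂ ∈ Γ := by rw [hΓ]; exact ⟨hmem₂, hnorm₂⟩
  set A : ℍ[ℝ,(a:ℝ),(b:ℝ)] := (α : ℍ[ℝ,(a:ℝ),(b:ℝ)]) with hAdef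
  set Ainv : ℍ[ℝ,(a:ℝ),(b:ℝ)] := ((α⁻¹ : _ˣ) : ℍ[ℝ,(a:ℝ),(b:ℝ)]) with hAinvdef
  have hAi1 : Ainv * A = 1 := Units.inv_mul α
  have hAi2 : A * Ainv = 1 := Units.mul_inv α
  obtain ⟨γ₁', hγ₁'Γ, hg1⟩ := (hα γ₁ hγ₁Γ).1
  obtain ⟨γ₂', hγ₂'Γ, hg2⟩ := (hα γ₂ hγ₂Γ).1
  rw [hΓ] at hγ₁'Γ hγ₂'Γ
  obtain ⟨-, hnorm₁'⟩ := hγ₁'Γ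
  obtain ⟨-, hnorm₂'⟩ := hγ₂'Γ
  replace hg1 : QuaternionAlgebra.toReal a b γ₁' = A * QuaternionAlgebra.toReal a b γ₁ * Ainv := hg1
  replace hg2 : QuaternionAlgebra.toReal a b γ₂' = A * QuaternionAlgebra.toReal a b γ₂ * Ainv := hg2
  have hu₁re : u₁.re = 0 := by
    have h := congrArg QuaternionAlgebra.re hst1
    simp at h; linarith
  have hu₂re : u₂.re = 0 := by
    have h := congrArg QuaternionAlgebra.re hst2
    simp at h; linarith
  -- real conjugation preserves re
  have hreconj : ∀ x : ℍ[ℝ,(a:ℝ),(b:ℝ)], (A * x * Ainv).re = x.re := by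
    intro x
    rw [re_mul_comm', ← mul_assoc, hAi1, one_mul]
  -- re of γ'
  have hre1 : γ₁'.re = t₁ := by
    have h := congrArg QuaternionAlgebra.re hg1
    rw [hreconj] at h
    simp only [QuaternionAlgebra.toReal_re] at h
    have h2 : γ₁'.re = γ₁.re := by exact_mod_cast h
    rw [h2, hγ₁def]
    simp [hu₁re]
  have hre2 : γ₂'.re = t₂ := by
    have h := congrArg QuaternionAlgebra.re hg2
    rw [hreconj] at h
    simp only [QuaternionAlgebra.toReal_re] at h
    have h2 : γ₂'.re = γ₂.re := by exact_mod_cast h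
    rw [h2, hγ₂def]
    simp [hu₂re]
  -- star of γ'
  have hstar1 : star γ₁' = (2*t₁)•(1:ℍ[ℚ,a,b]) - γ₁' := by
    have h := QuaternionAlgebra.self_add_star' γ₁'
    rw [hre1, zero_mul, add_zero, coe_eq_smul_one] at h
    exact eq_sub_of_add_eq' h
  have hstar2 : star γ₂' = (2*t₂)•(1:ℍ[ℚ,a,b]) - γ₂' := by
    have h := QuaternionAlgebra.self_add_star' γ₂'
    rw [hre2, zero_mul, add_zero, coe_eq_smul_one] at h
    exact eq_sub_of_add_eq' h
  -- squared pure parts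
  have hp1sq : (γ₁' - t₁•(1:ℍ[ℚ,a,b])) * (γ₁' - t₁•(1:ℍ[ℚ,a,b])) = (A₁*(s₁*s₁))•(1:ℍ[ℚ,a,b]) := by
    have key : γ₁' * star γ₁' = 1 := hnorm₁'
    rw [hstar1] at key
    have expand : (γ₁' - t₁•(1:ℍ[ℚ,a,b])) * (γ₁' - t₁•(1:ℍ[ℚ,a,b]))
        = γ₁' * ((2*t₁)•(1:ℍ[ℚ,a,b]) - γ₁') * (-1 : ℚ) • (1:ℍ[ℚ,a,b])
          + (t₁*t₁)•(1:ℍ[ℚ,a,b]) := by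
      simp only [sub_mul, mul_sub, smul_mul_assoc, mul_smul_comm, one_mul, mul_one,
        smul_smul, neg_smul, one_smul, smul_sub, mul_neg_one, mul_neg, neg_neg]
      module
    rw [expand, key]
    have hq : t₁*t₁ - 1 = A₁*(s₁*s₁) := by linear_combination hpell₁
    rw [← hq]
    simp only [one_mul, neg_smul, one_smul]
    module
  have hp2sq : (γ₂' - t₂•(1:ℍ[ℚ,a,b])) * (γ₂' - t₂•(1:ℍ[ℚ,a,b])) = (A₂*(s₂*s₂))•(1:ℍ[ℚ,a,b]) := by
    have key : γ₂' * star γ₂' = 1 := hnorm₂'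
    rw [hstar2] at key
    have expand : (γ₂' - t₂•(1:ℍ[ℚ,a,b])) * (γ₂' - t₂•(1:ℍ[ℚ,a,b]))
        = γ₂' * ((2*t₂)•(1:ℍ[ℚ,a,b]) - γ₂') * (-1 : ℚ) • (1:ℍ[ℚ,a,b])
          + (t₂*t₂)•(1:ℍ[ℚ,a,b]) := by
      simp only [sub_mul, mul_sub, smul_mul_assoc, mul_smul_comm, one_mul, mul_one,
        smul_smul, neg_smul, one_smul, smul_sub, mul_neg_one, mul_neg, neg_neg]
      module
    rw [expand, key]
    have hq : t₂*t₂ - 1 = A₂*(s₂*s₂) := by linear_combination hpell₂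
    rw [← hq]
    simp only [one_mul, neg_smul, one_smul]
    module
  set u₁' : ℍ[ℚ,a,b] := s₁⁻¹ • (γ₁' - t₁•(1:ℍ[ℚ,a,b])) with hu₁'def
  set u₂' : ℍ[ℚ,a,b] := s₂⁻¹ • (γ₂' - t₂•(1:ℍ[ℚ,a,b])) with hu₂'def
  have hdecomp1 : γ₁' = t₁•(1:ℍ[ℚ,a,b]) + s₁•u₁' := by
    rw [hu₁'def, smul_smul, mul_inv_cancel₀ hs₁ne, one_smul]
    abel
  have hdecomp2 : γ₂' = t₂•(1:ℍ[ℚ,a,b]) + s₂•u₂' := by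
    rw [hu₂'def, smul_smul, mul_inv_cancel₀ hs₂ne, one_smul]
    abel
  have hU1' : u₁'*u₁' = A₁•(1:ℍ[ℚ,a,b]) := by
    rw [hu₁'def, smul_mul_smul_comm, hp1sq, smul_smul]
    congr 1
    field_simp
  have hU2' : u₂'*u₂' = A₂•(1:ℍ[ℚ,a,b]) := by
    rw [hu₂'def, smul_mul_smul_comm, hp2sq, smul_smul]
    congr 1
    field_simp
  -- re of mixed product
  have hg1' : A * QuaternionAlgebra.toReal a b γ₁ = QuaternionAlgebra.toReal a b γ₁' * A := by
    rw [hg1]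
    calc A * QuaternionAlgebra.toReal a b γ₁
        = (A * QuaternionAlgebra.toReal a b γ₁) * (Ainv * A) := by rw [hAi1, mul_one]
    _ = A * QuaternionAlgebra.toReal a b γ₁ * Ainv * A := by noncomm_ring
  have hg2' : A * QuaternionAlgebra.toReal a b γ₂ = QuaternionAlgebra.toReal a b γ₂' * A := by
    rw [hg2]
    calc A * QuaternionAlgebra.toReal a b γ₂
        = (A * QuaternionAlgebra.toReal a b γ₂) * (Ainv * A) := by rw [hAi1, mul_one]
    _ = A * QuaternionAlgebra.toReal a b γ₂ * Ainv * A := by noncomm_ring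
  have hmulreal : QuaternionAlgebra.toReal a b (γ₁'*γ₂')
      = A * QuaternionAlgebra.toReal a b (γ₁*γ₂) * Ainv := by
    rw [QuaternionAlgebra.toReal_mul, QuaternionAlgebra.toReal_mul, hg1, hg2]
    calc (A * QuaternionAlgebra.toReal a b γ₁ * Ainv) * (A * QuaternionAlgebra.toReal a b γ₂ * Ainv)
        = (A * QuaternionAlgebra.toReal a b γ₁) * ((Ainv * A) * (QuaternionAlgebra.toReal a b γ₂ * Ainv)) := by
          noncomm_ring
    _ = (A * QuaternionAlgebra.toReal a b γ₁) * (QuaternionAlgebra.toReal a b γ₂ * Ainv) := by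
          rw [hAi1, one_mul]
    _ = A * (QuaternionAlgebra.toReal a b γ₁ * QuaternionAlgebra.toReal a b γ₂) * Ainv := by
          noncomm_ring
  have h12re : (u₁*u₂).re = 0 := by
    have h := re_mul_comm' u₁ u₂
    rw [h12, QuaternionAlgebra.re_neg] at h
    linarith
  have hγγre : (γ₁*γ₂).re = t₁*t₂ := by
    have expand : γ₁*γ₂ = (t₁*t₂)•(1:ℍ[ℚ,a,b]) + (t₁*s₂)•u₂ + (s₁*t₂)•u₁ + (s₁*s₂)•(u₁*u₂) := by
      rw [hγ₁def, hγ₂def]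
      simp only [mul_add, add_mul, smul_mul_assoc, mul_smul_comm, one_mul, mul_one, smul_smul]
      module
    rw [expand]
    simp [hu₁re, hu₂re, h12re]
  have hre12 : (γ₁'*γ₂').re = t₁*t₂ := by
    have h := congrArg QuaternionAlgebra.re hmulreal
    rw [hreconj] at h
    simp only [QuaternionAlgebra.toReal_re] at h
    have h2 : (γ₁'*γ₂').re = (γ₁*γ₂).re := by exact_mod_cast h
    rw [h2, hγγre]
  -- anticommutation of primes
  have hanti' : u₂'*u₁' = -(u₁'*u₂') := by
    set P₁ : ℍ[ℚ,a,b] := γ₁' - t₁•(1:ℍ[ℚ,a,b]) with hP₁def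
    set P₂ : ℍ[ℚ,a,b] := γ₂' - t₂•(1:ℍ[ℚ,a,b]) with hP₂def
    have hstarP1 : star P₁ = -P₁ := by
      rw [hP₁def, star_sub, hstar1, QuaternionAlgebra.star_smul, star_one]
      module
    have hstarP2 : star P₂ = -P₂ := by
      rw [hP₂def, star_sub, hstar2, QuaternionAlgebra.star_smul, star_one]
      module
    have hP12re : (P₁*P₂).re = 0 := by
      have expand : P₁*P₂ = γ₁'*γ₂' - t₂•γ₁' - t₁•γ₂' + (t₁*t₂)•(1:ℍ[ℚ,a,b]) := by
        rw [hP₁def, hP₂def]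
        simp only [sub_mul, mul_sub, smul_mul_assoc, mul_smul_comm, one_mul, mul_one, smul_smul]
        module
      rw [expand]
      simp [hre12, hre1, hre2]
      ring
    have hS : P₁*P₂ + P₂*P₁ = 0 := by
      have h := QuaternionAlgebra.self_add_star' (P₁*P₂)
      rw [hP12re] at h
      norm_num at h
      simp only [star_mul, hstarP1, hstarP2, neg_mul_neg] at h
      exact h
    have hsum : u₁'*u₂' + u₂'*u₁' = 0 := by
      rw [hu₁'def, hu₂'def, smul_mul_smul_comm, smul_mul_smul_comm]
      rw [show P₂*P₁ = -(P₁*P₂) from eq_neg_of_add_eq_zero_right hS]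
      rw [smul_neg, mul_comm s₂⁻¹ s₁⁻¹]
      abel
    exact eq_neg_of_add_eq_zero_right hsum
  -- Skolem-Noether
  obtain ⟨β, hβne, hb1, hb2⟩ := skolem hdiv hA₁ns (ne_of_gt hA₂pos) hU1 hU2 h12 hU1' hU2' hanti' hspan4
  have hbγ₁ : β*γ₁ = γ₁'*β := by
    rw [hγ₁def, hdecomp1]
    simp only [mul_add, add_mul, mul_smul_comm, smul_mul_assoc, mul_one, one_mul, hb1]
  have hbγ₂ : β*γ₂ = γ₂'*β := by
    rw [hγ₂def, hdecomp2]
    simp only [mul_add, add_mul, mul_smul_comm, smul_mul_assoc, mul_one, one_mul, hb2]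
  -- pass to ℝ
  set n : ℚ := β.re*β.re - a*β.imI*β.imI - b*β.imJ*β.imJ + a*b*β.imK*β.imK with hndef
  have hβs : β * star β = (n : ℍ[ℚ,a,b]) := mul_star_self'' β
  have hsβ : star β * β = (n : ℍ[ℚ,a,b]) := star_mul_self'' β
  have hnne : n ≠ 0 := by
    intro h0
    rw [h0, QuaternionAlgebra.coe_zero] at hβs
    rcases no_zero_div hdiv hβs with h | h
    · exact hβne h
    · exact hβne (star_eq_zero.1 h)
  have hnR : ((n:ℝ)) ≠ 0 := Rat.cast_ne_zero.2 hnne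
  set Lβ : ℍ[ℝ,(a:ℝ),(b:ℝ)] := QuaternionAlgebra.toReal a b β with hLβdef
  set binv : ℍ[ℝ,(a:ℝ),(b:ℝ)] := ((n:ℝ))⁻¹ • QuaternionAlgebra.toReal a b (star β) with hbinvdef
  have hbi1 : Lβ * binv = 1 := by
    rw [hLβdef, hbinvdef, mul_smul_comm, ← QuaternionAlgebra.toReal_mul, hβs,
      QuaternionAlgebra.toReal_coe, QuaternionAlgebra.smul_coe,
      inv_mul_cancel₀ hnR, QuaternionAlgebra.coe_one]
  have hbi2 : binv * Lβ = 1 := by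
    rw [hLβdef, hbinvdef, smul_mul_assoc, ← QuaternionAlgebra.toReal_mul, hsβ,
      QuaternionAlgebra.toReal_coe, QuaternionAlgebra.smul_coe,
      inv_mul_cancel₀ hnR, QuaternionAlgebra.coe_one]
  have hεγ1 : Lβ * QuaternionAlgebra.toReal a b γ₁ = QuaternionAlgebra.toReal a b γ₁' * Lβ := by
    rw [hLβdef, ← QuaternionAlgebra.toReal_mul, ← QuaternionAlgebra.toReal_mul, hbγ₁]
  have hεγ2 : Lβ * QuaternionAlgebra.toReal a b γ₂ = QuaternionAlgebra.toReal a b γ₂' * Lβ := by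
    rw [hLβdef, ← QuaternionAlgebra.toReal_mul, ← QuaternionAlgebra.toReal_mul, hbγ₂]
  have hcommγ1 : binv * QuaternionAlgebra.toReal a b γ₁' = QuaternionAlgebra.toReal a b γ₁ * binv := by
    calc binv * QuaternionAlgebra.toReal a b γ₁'
        = (binv * QuaternionAlgebra.toReal a b γ₁') * (Lβ * binv) := by rw [hbi1, mul_one]
    _ = binv * ((QuaternionAlgebra.toReal a b γ₁' * Lβ) * binv) := by noncomm_ring
    _ = binv * ((Lβ * QuaternionAlgebra.toReal a b γ₁) * binv) := by rw [← hεγ1]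
    _ = (binv * Lβ) * (QuaternionAlgebra.toReal a b γ₁ * binv) := by noncomm_ring
    _ = QuaternionAlgebra.toReal a b γ₁ * binv := by rw [hbi2, one_mul]
  have hcommγ2 : binv * QuaternionAlgebra.toReal a b γ₂' = QuaternionAlgebra.toReal a b γ₂ * binv := by
    calc binv * QuaternionAlgebra.toReal a b γ₂'
        = (binv * QuaternionAlgebra.toReal a b γ₂') * (Lβ * binv) := by rw [hbi1, mul_one]
    _ = binv * ((QuaternionAlgebra.toReal a b γ₂' * Lβ) * binv) := by noncomm_ring
    _ = binv * ((Lβ * QuaternionAlgebra.toReal a b γ₂) * binv) := by rw [← hεγ2]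
    _ = (binv * Lβ) * (QuaternionAlgebra.toReal a b γ₂ * binv) := by noncomm_ring
    _ = QuaternionAlgebra.toReal a b γ₂ * binv := by rw [hbi2, one_mul]
  set μ : ℍ[ℝ,(a:ℝ),(b:ℝ)] := binv * A with hμdef
  have hμγ1 : μ * QuaternionAlgebra.toReal a b γ₁ = QuaternionAlgebra.toReal a b γ₁ * μ := by
    calc μ * QuaternionAlgebra.toReal a b γ₁ = binv * (A * QuaternionAlgebra.toReal a b γ₁) := by
          rw [hμdef, mul_assoc]
    _ = binv * (QuaternionAlgebra.toReal a b γ₁' * A) := by rw [hg1']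
    _ = (binv * QuaternionAlgebra.toReal a b γ₁') * A := by rw [mul_assoc]
    _ = (QuaternionAlgebra.toReal a b γ₁ * binv) * A := by rw [hcommγ1]
    _ = QuaternionAlgebra.toReal a b γ₁ * μ := by rw [hμdef, mul_assoc]
  have hμγ2 : μ * QuaternionAlgebra.toReal a b γ₂ = QuaternionAlgebra.toReal a b γ₂ * μ := by
    calc μ * QuaternionAlgebra.toReal a b γ₂ = binv * (A * QuaternionAlgebra.toReal a b γ₂) := by
          rw [hμdef, mul_assoc]
    _ = binv * (QuaternionAlgebra.toReal a b γ₂' * A) := by rw [hg2']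
    _ = (binv * QuaternionAlgebra.toReal a b γ₂') * A := by rw [mul_assoc]
    _ = (QuaternionAlgebra.toReal a b γ₂ * binv) * A := by rw [hcommγ2]
    _ = QuaternionAlgebra.toReal a b γ₂ * μ := by rw [hμdef, mul_assoc]
  have hexp1 : QuaternionAlgebra.toReal a b γ₁
      = (t₁:ℝ)•(1:ℍ[ℝ,(a:ℝ),(b:ℝ)]) + (s₁:ℝ)•QuaternionAlgebra.toReal a b u₁ := by
    rw [hγ₁def, QuaternionAlgebra.toReal_add, QuaternionAlgebra.toReal_smul,
      QuaternionAlgebra.toReal_smul, QuaternionAlgebra.toReal_one]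
  have hexp2 : QuaternionAlgebra.toReal a b γ₂
      = (t₂:ℝ)•(1:ℍ[ℝ,(a:ℝ),(b:ℝ)]) + (s₂:ℝ)•QuaternionAlgebra.toReal a b u₂ := by
    rw [hγ₂def, QuaternionAlgebra.toReal_add, QuaternionAlgebra.toReal_smul,
      QuaternionAlgebra.toReal_smul, QuaternionAlgebra.toReal_one]
  have hμu1 : μ * QuaternionAlgebra.toReal a b u₁ = QuaternionAlgebra.toReal a b u₁ * μ := by
    have h := hμγ1
    rw [hexp1, mul_add, add_mul, mul_smul_comm, mul_smul_comm, smul_mul_assoc, smul_mul_assoc,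
      mul_one, one_mul] at h
    have h2 := add_left_cancel h
    have hs₁R : ((s₁:ℝ)) ≠ 0 := Rat.cast_ne_zero.2 hs₁ne
    exact smul_right_injective _ hs₁R h2
  have hμu2 : μ * QuaternionAlgebra.toReal a b u₂ = QuaternionAlgebra.toReal a b u₂ * μ := by
    have h := hμγ2
    rw [hexp2, mul_add, add_mul, mul_smul_comm, mul_smul_comm, smul_mul_assoc, smul_mul_assoc,
      mul_one, one_mul] at h
    have h2 := add_left_cancel h
    have hs₂R : ((s₂:ℝ)) ≠ 0 := Rat.cast_ne_zero.2 hs₂ne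
    exact smul_right_injective _ hs₂R h2
  obtain ⟨r, hr⟩ := hcomm μ hμu1 hμu2
  have hαLβ : A = Lβ * μ := by
    calc A = (Lβ * binv) * A := by rw [hbi1, one_mul]
    _ = Lβ * μ := by rw [hμdef, mul_assoc]
  have hrne : r ≠ 0 := by
    intro h0
    rw [h0, zero_smul] at hr
    have hA0 : A = 0 := by rw [hαLβ, hr, mul_zero]
    have : (1:ℍ[ℝ,(a:ℝ),(b:ℝ)]) = 0 := by rw [← hAi2, hA0, zero_mul]
    exact one_ne_zero this
  refine ⟨r, hrne, β, hβne, ?_⟩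
  calc A = Lβ * (r•(1:ℍ[ℝ,(a:ℝ),(b:ℝ)])) := by rw [← hr, hαLβ]
  _ = r • Lβ := by rw [mul_smul_comm, mul_one]

end mainaux

/-- Let `B = ℍ[ℚ, a, b]` (`a, b ≠ 0`) be an indefinite rational quaternion division
algebra, let `O ⊆ B` be an order with group of norm-one elements
`Γ = {γ ∈ O : γ * star γ = 1}`, and let `ι : B → ℍ[ℝ, a, b]` be the canonical
embedding.  If a unit `α` of `ℍ[ℝ, a, b]` normalizes `ι(Γ)`, then `α = r • ι(β)` for
some nonzero real number `r` and some nonzero `β ∈ B`. -/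
theorem quaternion_normalizer_eq_smul (a b : ℚ) (ha : a ≠ 0) (hb : b ≠ 0)
    (hdiv : ∀ x : ℍ[ℚ, a, b], x ≠ 0 → IsUnit x)
    (hindef : ¬ ∀ x : ℍ[ℝ, (a : ℝ), (b : ℝ)], x ≠ 0 → IsUnit x)
    (O : Subring ℍ[ℚ, a, b])
    (hfg : O.toAddSubgroup.FG)
    (hspan : Submodule.span ℚ (O : Set ℍ[ℚ, a, b]) = ⊤)
    (Γ : Set ℍ[ℚ, a, b]) (hΓ : Γ = {γ : ℍ[ℚ, a, b] | γ ∈ O ∧ γ * star γ = 1})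
    (α : (ℍ[ℝ, (a : ℝ), (b : ℝ)])ˣ)
    (hα : ∀ γ ∈ Γ, (α : ℍ[ℝ, (a : ℝ), (b : ℝ)]) * QuaternionAlgebra.toReal a b γ *
        ((α⁻¹ : _ˣ) : ℍ[ℝ, (a : ℝ), (b : ℝ)]) ∈ QuaternionAlgebra.toReal a b '' Γ ∧
      ((α⁻¹ : _ˣ) : ℍ[ℝ, (a : ℝ), (b : ℝ)]) * QuaternionAlgebra.toReal a b γ *
        (α : ℍ[ℝ, (a : ℝ), (b : ℝ)]) ∈ QuaternionAlgebra.toReal a b '' Γ) :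
    ∃ r : ℝ, r ≠ 0 ∧ ∃ β : ℍ[ℚ, a, b], β ≠ 0 ∧
      (α : ℍ[ℝ, (a : ℝ), (b : ℝ)]) = r • QuaternionAlgebra.toReal a b β := by
  have haR : ((a:ℝ)) ≠ 0 := Rat.cast_ne_zero.2 ha
  have hbR : ((b:ℝ)) ≠ 0 := Rat.cast_ne_zero.2 hb
  have nsa : ¬ IsSquare a := nonsquare_of hdiv hII nscI
  have nsb : ¬ IsSquare b := nonsquare_of hdiv hJJ nscJ
  have nsk : ¬ IsSquare (-(a*b)) := nonsquare_of hdiv hKK nscK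
  have hsign : 0 < a ∨ 0 < b := by
    by_contra hcon
    push_neg at hcon
    obtain ⟨ha', hb'⟩ := hcon
    have ha2 : a < 0 := lt_of_le_of_ne ha' ha
    have hb2 : b < 0 := lt_of_le_of_ne hb' hb
    exact hindef (fun x hx => definite_isUnit (by exact_mod_cast ha2) (by exact_mod_cast hb2) x hx)
  rcases lt_or_gt_of_ne ha with haneg | hapos
  · -- a < 0, so b > 0 : use (qK, qJ)
    have hbpos : 0 < b := by
      rcases hsign with h | h
      · exact absurd h (not_lt.2 (le_of_lt haneg))
      · exact h
    have hkpos : 0 < -(a*b) := by nlinarith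
    refine main_aux ha hb hdiv O hspan Γ hΓ α hα (qK a b) (qJ a b) (-(a*b)) b
      hKK hJJ hJK sK sJ hkpos hbpos nsk nsb (spanKJ hb) ?_
    intro μ h1 h2
    rw [tK] at h1
    rw [tJ] at h2
    obtain ⟨hi1, hj1⟩ := commK haR hbR μ h1
    obtain ⟨hi2, hk2⟩ := commJ hbR μ h2
    exact scalar_of_ims μ hi1 hj1 hk2
  · -- a > 0
    rcases lt_or_gt_of_ne hb with hbneg | hbpos
    · -- b < 0 : use (qI, qK)
      have hkpos : 0 < -(a*b) := by nlinarith
      refine main_aux ha hb hdiv O hspan Γ hΓ α hα (qI a b) (qK a b) a (-(a*b))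
        hII hKK hKI sI sK hapos hkpos nsa nsk (spanIK ha) ?_
      intro μ h1 h2
      rw [tI] at h1
      rw [tK] at h2
      obtain ⟨hj1, hk1⟩ := commI haR μ h1
      obtain ⟨hi2, hj2⟩ := commK haR hbR μ h2
      exact scalar_of_ims μ hi2 hj1 hk1
    · -- b > 0 : use (qI, qJ)
      refine main_aux ha hb hdiv O hspan Γ hΓ α hα (qI a b) (qJ a b) a b
        hII hJJ hJI sI sJ hapos hbpos nsa nsb spanIJ ?_
      intro μ h1 h2
      rw [tI] at h1
      rw [tJ] at h2
      obtain ⟨hj1, hk1⟩ := commI haR μ h1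
      obtain ⟨hi2, hk2⟩ := commJ hbR μ h2
      exact scalar_of_ims μ hi2 hj1 hk1
end
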